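/- arXiv:1412.5632 — 6 statements merged into one kernel-verified Lean document; each statement's English description precedes it below -/
import Mathlib

section
/- Let λ > 0 and μ ≥ 0, and let ρ : ℝ → ℝ be μ-amenable. Then |ρ'(t)| ≤ λ for every t ≠ 0. -/
open scoped BigOperators

/-- A function `ρ : ℝ → ℝ` is `μ`-amenable (with selection parameter `lam > 0`):
(i) symmetric around zero with `ρ 0 = 0`; (ii) nondecreasing on `[0, ∞)`;
(iii) `t ↦ ρ t / t` nonincreasing on `(0, ∞)`; (iv) differentiable away from `0`;
(v) `t ↦ ρ t + μ/2 t²` convex; (vi) `ρ'(t) → lam` as `t → 0⁺`. -/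
structure Amenable (lam mu : ℝ) (ρ : ℝ → ℝ) : Prop where
  symm : ∀ t : ℝ, ρ (-t) = ρ t
  zero : ρ 0 = 0
  mono : MonotoneOn ρ (Set.Ici (0 : ℝ))
  ratio : AntitoneOn (fun t => ρ t / t) (Set.Ioi (0 : ℝ))
  diff : ∀ t : ℝ, t ≠ 0 → DifferentiableAt ℝ ρ t
  conv : ConvexOn ℝ Set.univ (fun t => ρ t + mu / 2 * t ^ 2)
  deriv_lim : Filter.Tendsto (deriv ρ) (nhdsWithin 0 (Set.Ioi 0)) (nhds lam)

/-- if `ρ` is `μ`-amenable, then `|ρ'(t)| ≤ λ` for every `t ≠ 0`. -/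
theorem amenable_abs_deriv_le (lam mu : ℝ) (hlam : 0 < lam) (hmu : 0 ≤ mu)
    (ρ : ℝ → ℝ) (h : Amenable lam mu ρ) :
    ∀ t : ℝ, t ≠ 0 → |deriv ρ t| ≤ lam := by
  -- continuity of ρ (from convexity of ρ + μ/2 t²)
  have hcont : Continuous ρ := by
    have hf : ContinuousOn (fun t : ℝ => ρ t + mu / 2 * t ^ 2) Set.univ :=
      h.conv.continuousOn isOpen_univ
    have hf' : Continuous (fun t : ℝ => ρ t + mu / 2 * t ^ 2) :=
      continuousOn_univ.1 hf
    have : ρ = fun t : ℝ => (ρ t + mu / 2 * t ^ 2) - mu / 2 * t ^ 2 := by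
      funext t; ring
    rw [this]
    exact hf'.sub ((continuous_const.mul (continuous_pow 2)) : Continuous fun t : ℝ => mu / 2 * t ^ 2)
  -- for t > 0, ρ t / t ≤ lam
  have hratio_le : ∀ t : ℝ, 0 < t → ρ t / t ≤ lam := by
    intro t ht
    refine le_of_forall_pos_le_add ?_
    intro ε hε
    have hlim := h.deriv_lim
    rw [Metric.tendsto_nhdsWithin_nhds] at hlim
    obtain ⟨δ, hδ, hδ'⟩ := hlim ε hε
    set s := min (δ / 2) t with hs
    have hs0 : 0 < s := lt_min (by linarith) ht
    have hst : s ≤ t := min_le_right _ _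
    obtain ⟨ξ, hξ, hderiv⟩ := exists_deriv_eq_slope ρ hs0 hcont.continuousOn
      (fun x hx => (h.diff x (ne_of_gt hx.1)).differentiableWithinAt)
    have hξδ : dist ξ 0 < δ := by
      rw [Real.dist_eq, sub_zero, abs_of_pos hξ.1]
      calc ξ < s := hξ.2
        _ ≤ δ / 2 := min_le_left _ _
        _ < δ := by linarith
    have hd := hδ' (Set.mem_Ioi.2 hξ.1) hξδ
    rw [Real.dist_eq] at hd
    have hd' : deriv ρ ξ ≤ lam + ε := by
      have := abs_lt.1 hd
      linarith [this.1, this.2]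
    have hslope : ρ s / s ≤ lam + ε := by
      rw [h.zero, sub_zero, sub_zero] at hderiv
      rw [← hderiv]; exact hd'
    calc ρ t / t ≤ ρ s / s := h.ratio hs0 ht hst
      _ ≤ lam + ε := hslope
  -- key bounds for t > 0
  have key : ∀ t : ℝ, 0 < t → 0 ≤ deriv ρ t ∧ deriv ρ t ≤ lam := by
    intro t ht
    have hd := (h.diff t ht.ne').hasDerivAt
    have hT : Filter.Tendsto (slope ρ t) (nhdsWithin t (Set.Ioi t)) (nhds (deriv ρ t)) :=
      (hasDerivAt_iff_tendsto_slope.1 hd).mono_left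
        (nhdsWithin_mono _ fun y hy => ne_of_gt (Set.mem_Ioi.1 hy))
    constructor
    · refine ge_of_tendsto hT ?_
      filter_upwards [self_mem_nhdsWithin] with y hy
      have hy' : t < y := hy
      have hmono : ρ t ≤ ρ y := h.mono (Set.mem_Ici.2 ht.le)
        (Set.mem_Ici.2 (ht.trans hy').le) hy'.le
      rw [slope_def_field]
      exact div_nonneg (by linarith) (by linarith)
    · have h1 : deriv ρ t ≤ ρ t / t := by
        refine le_of_tendsto hT ?_
        filter_upwards [self_mem_nhdsWithin] with y hy
        have hy' : t < y := hy
        have hy0 : 0 < y := ht.trans hy'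
        have hr : ρ y / y ≤ ρ t / t := h.ratio ht (Set.mem_Ioi.2 hy0) hy'.le
        have hr' : ρ y ≤ ρ t / t * y := (div_le_iff₀ hy0).1 hr
        have hcancel : ρ t / t * t = ρ t := by field_simp
        rw [slope_def_field, div_le_iff₀ (by linarith)]
        nlinarith
      exact h1.trans (hratio_le t ht)
  intro t ht
  rcases lt_or_gt_of_ne ht with hneg | hpos
  · have hsym : deriv ρ t = -deriv ρ (-t) := by
      have hr : ρ = fun x => ρ (-x) := funext fun x => (h.symm x).symm
      conv_lhs => rw [hr]
      exact deriv_comp_neg ρ t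
    obtain ⟨h1, h2⟩ := key (-t) (by linarith)
    rw [hsym, abs_neg, abs_of_nonneg h1]
    exact h2
  · obtain ⟨h1, h2⟩ := key t hpos
    rw [abs_of_nonneg h1]
    exact h2
end

section
/- Let λ > 0 and μ ≥ 0, and let ρ : ℝ → ℝ be μ-amenable. Define q(t) := λ|t| − ρ(t). Then q is differentiable at every point of ℝ with q'(0) = 0, and the function t ↦ q(t) − (μ/2)t² is concave on ℝ. -/
open scoped BigOperators
open Filter Set Topology

/-- for a `μ`-amenable `ρ`, the function `q(t) = λ|t| − ρ(t)` is differentiable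
everywhere with `q'(0) = 0`, and `t ↦ q(t) − (μ/2) t²` is concave on `ℝ`. -/
theorem q_lambda_differentiable_concave (lam mu : ℝ) (hlam : 0 < lam) (hmu : 0 ≤ mu)
    (ρ : ℝ → ℝ) (h : Amenable lam mu ρ) :
    (∀ t : ℝ, DifferentiableAt ℝ (fun t => lam * |t| - ρ t) t) ∧
    deriv (fun t => lam * |t| - ρ t) 0 = 0 ∧
    ConcaveOn ℝ Set.univ (fun t => (lam * |t| - ρ t) - mu / 2 * t ^ 2) := by
  set g : ℝ → ℝ := fun t => ρ t + mu / 2 * t ^ 2 with hgdef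
  have hgconv : ConvexOn ℝ Set.univ g := h.conv
  have hgcont : Continuous g := by
    rw [← continuousOn_univ]
    exact hgconv.continuousOn isOpen_univ
  have hpolyd : ∀ t : ℝ, HasDerivAt (fun t : ℝ => mu / 2 * t ^ 2) (mu * t) t := by
    intro t
    have := (hasDerivAt_pow 2 t).const_mul (mu / 2)
    exact this.congr_deriv (by push_cast; ring)
  have hgdiff : ∀ t : ℝ, t ≠ 0 → DifferentiableAt ℝ g t := fun t ht =>
    (h.diff t ht).add (hpolyd t).differentiableAt
  have hg0 : g 0 = 0 := by simp [hgdef, h.zero]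
  have hgeven : ∀ t, g (-t) = g t := fun t => by simp [hgdef, h.symm t]
  -- derivative of g away from 0
  have hgd : ∀ t : ℝ, t ≠ 0 → HasDerivAt g (deriv ρ t + mu * t) t := fun t ht =>
    (h.diff t ht).hasDerivAt.add (hpolyd t)
  have hderiv_g : ∀ t : ℝ, t ≠ 0 → deriv g t = deriv ρ t + mu * t := fun t ht =>
    (hgd t ht).deriv
  -- limit of deriv g at 0+
  have hdg_lim : Tendsto (deriv g) (𝓝[>] (0:ℝ)) (𝓝 lam) := by
    have h1 : Tendsto (fun t : ℝ => deriv ρ t + mu * t) (𝓝[>] (0:ℝ)) (𝓝 (lam + mu * 0)) := by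
      exact h.deriv_lim.add ((tendsto_const_nhds.mul (tendsto_id.mono_left nhdsWithin_le_nhds)))
    rw [mul_zero, add_zero] at h1
    refine h1.congr' ?_
    filter_upwards [self_mem_nhdsWithin] with t ht
    exact (hderiv_g t (ne_of_gt ht)).symm
  -- monotonicity of deriv g on Ioi 0
  have hmono : MonotoneOn (deriv g) (Set.Ioi (0:ℝ)) := by
    refine (hgconv.subset (subset_univ _) (convex_Ioi 0)).monotoneOn_deriv ?_
    exact fun x hx => hgdiff x (ne_of_gt hx)
  -- lam ≤ deriv g t for t > 0
  have hge : ∀ t : ℝ, 0 < t → lam ≤ deriv g t := by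
    intro t ht
    refine le_of_tendsto hdg_lim ?_
    filter_upwards [Ioo_mem_nhdsGT ht] with s hs
    exact hmono hs.1 ht (le_of_lt hs.2)
  -- lam ≤ g t / t for t > 0
  have hratio_lower : ∀ t : ℝ, 0 < t → lam ≤ g t / t := by
    intro t ht
    have hcont : Tendsto (fun s => (g t - g s) / (t - s)) (𝓝[>] (0:ℝ)) (𝓝 (g t / t)) := by
      have : Tendsto (fun s => (g t - g s) / (t - s)) (𝓝 (0:ℝ)) (𝓝 ((g t - g 0) / (t - 0))) := by
        exact (tendsto_const_nhds.sub (hgcont.tendsto 0)).div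
          (tendsto_const_nhds.sub tendsto_id) (by simpa using ne_of_gt ht)
      rw [hg0, sub_zero, sub_zero] at this
      exact this.mono_left nhdsWithin_le_nhds
    refine le_of_tendsto_of_tendsto hdg_lim hcont ?_
    filter_upwards [Ioo_mem_nhdsGT ht] with s hs
    have := hgconv.deriv_le_slope (mem_univ s) (mem_univ t) hs.2 (hgdiff s (ne_of_gt hs.1))
    rwa [slope_def_field] at this
  -- g t / t ≤ deriv g t for t > 0
  have hratio_upper : ∀ t : ℝ, 0 < t → g t / t ≤ deriv g t := by
    intro t ht
    have := hgconv.slope_le_deriv (mem_univ (0:ℝ)) (mem_univ t) ht (hgdiff t (ne_of_gt ht))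
    rwa [slope_def_field, hg0, sub_zero, sub_zero] at this
  -- the auxiliary convex function f
  set f : ℝ → ℝ := fun t => g t - lam * |t| with hfdef
  have hf0val : f 0 = 0 := by simp [hfdef, hg0]
  have hfeven : ∀ t, f (-t) = f t := fun t => by simp [hfdef, hgeven t]
  -- slope of f at 0 tends to 0 from the right
  have hright : Tendsto (fun t => f t / t) (𝓝[>] (0:ℝ)) (𝓝 0) := by
    have hupper : Tendsto (fun t => deriv g t - lam) (𝓝[>] (0:ℝ)) (𝓝 0) := by
      have := hdg_lim.sub (tendsto_const_nhds (x := lam))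
      simpa using this
    refine tendsto_of_tendsto_of_tendsto_of_le_of_le' tendsto_const_nhds hupper ?_ ?_
    · filter_upwards [self_mem_nhdsWithin] with t ht
      have h1 := hratio_lower t ht
      have habs : |t| = t := abs_of_pos ht
      have htne : t ≠ 0 := ne_of_gt ht
      have hft : f t = g t - lam * t := by rw [hfdef]; simp [habs]
      have : f t / t = g t / t - lam := by
        rw [hft, sub_div, mul_div_assoc, div_self htne, mul_one]
      rw [this]; linarith
    · filter_upwards [self_mem_nhdsWithin] with t ht
      have h1 := hratio_upper t ht
      have habs : |t| = t := abs_of_pos ht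
      have htne : t ≠ 0 := ne_of_gt ht
      have hft : f t = g t - lam * t := by rw [hfdef]; simp [habs]
      have : f t / t = g t / t - lam := by
        rw [hft, sub_div, mul_div_assoc, div_self htne, mul_one]
      rw [this]; linarith
  -- f has derivative 0 at 0
  have hf0 : HasDerivAt f 0 0 := by
    rw [hasDerivAt_iff_tendsto_slope]
    have hslope : slope f 0 = fun t => f t / t := by
      funext t
      rw [slope_def_field, hf0val, sub_zero, sub_zero]
    rw [hslope, ← nhdsLT_sup_nhdsGT (0:ℝ), tendsto_sup]
    constructor
    · have hneg : Tendsto (fun t : ℝ => -t) (𝓝[<] (0:ℝ)) (𝓝[>] (0:ℝ)) := by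
        apply tendsto_nhdsWithin_of_tendsto_nhds_of_eventually_within
        · simpa using (tendsto_neg (0:ℝ)).mono_left nhdsWithin_le_nhds
        · filter_upwards [self_mem_nhdsWithin] with t ht
          simpa using ht
      have := (hright.comp hneg).neg
      rw [neg_zero] at this
      refine this.congr ?_
      intro t
      simp only [Function.comp]
      rw [hfeven t, div_neg, neg_neg]
    · exact hright
  -- derivatives of f away from 0
  have hfd_pos : ∀ t : ℝ, 0 < t → HasDerivAt f (deriv g t - lam) t := by
    intro t ht
    have := ((hgdiff t (ne_of_gt ht)).hasDerivAt).sub ((hasDerivAt_abs_pos ht).const_mul lam)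
    exact this.congr_deriv (by ring)
  have hfd_neg : ∀ t : ℝ, t < 0 → HasDerivAt f (deriv g t + lam) t := by
    intro t ht
    have := ((hgdiff t (ne_of_lt ht)).hasDerivAt).sub ((hasDerivAt_abs_neg ht).const_mul lam)
    have h2 : deriv g t - lam * (-1) = deriv g t + lam := by ring
    rw [h2] at this
    exact this
  have hfdiff : Differentiable ℝ f := by
    intro t
    rcases lt_trichotomy t 0 with ht | rfl | ht
    · exact (hfd_neg t ht).differentiableAt
    · exact hf0.differentiableAt
    · exact (hfd_pos t ht).differentiableAt
  have hdf0 : deriv f 0 = 0 := hf0.deriv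
  have hdf_pos : ∀ t, 0 < t → deriv f t = deriv g t - lam := fun t ht => (hfd_pos t ht).deriv
  have hdf_neg : ∀ t, t < 0 → deriv f t = deriv g t + lam := fun t ht => (hfd_neg t ht).deriv
  -- deriv g is odd on the negatives
  have hgodd : ∀ t : ℝ, t < 0 → deriv g t = -(deriv g (-t)) := by
    intro t ht
    have hd : HasDerivAt g (deriv g (-t)) (-t) :=
      (hgdiff (-t) (ne_of_gt (neg_pos.2 ht))).hasDerivAt
    have h1 : HasDerivAt (fun x => g (-x)) (deriv g (-t) * (-1)) t :=
      hd.comp t (hasDerivAt_neg t)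
    have h2 : (fun x => g (-x)) = g := funext hgeven
    rw [h2] at h1
    rw [h1.deriv]; ring
  have hdf_nonneg : ∀ t, 0 < t → 0 ≤ deriv f t := fun t ht => by
    rw [hdf_pos t ht]; linarith [hge t ht]
  have hdf_nonpos : ∀ t, t < 0 → deriv f t ≤ 0 := fun t ht => by
    rw [hdf_neg t ht, hgodd t ht]; linarith [hge (-t) (neg_pos.2 ht)]
  have hdfmono : Monotone (deriv f) := by
    intro a b hab
    rcases eq_or_lt_of_le hab with rfl | hab
    · exact le_rfl
    rcases lt_trichotomy a 0 with ha | rfl | ha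
    · rcases lt_trichotomy b 0 with hb | rfl | hb
      · rw [hdf_neg a ha, hdf_neg b hb, hgodd a ha, hgodd b hb]
        have := hmono (Set.mem_Ioi.2 (neg_pos.2 hb)) (Set.mem_Ioi.2 (neg_pos.2 ha))
          (by linarith)
        linarith
      · rw [hdf0]; exact hdf_nonpos a ha
      · exact le_trans (hdf_nonpos a ha) (hdf_nonneg b hb)
    · rw [hdf0]; exact hdf_nonneg b hab
    · rw [hdf_pos a ha, hdf_pos b (lt_trans ha hab)]
      have := hmono (Set.mem_Ioi.2 ha) (Set.mem_Ioi.2 (lt_trans ha hab)) hab.le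
      linarith
  have hfconv : ConvexOn ℝ Set.univ f := hdfmono.convexOn_univ_of_deriv hfdiff
  -- assemble
  have hq : (fun t => lam * |t| - ρ t) = fun t => mu / 2 * t ^ 2 - f t := by
    funext t; simp only [hfdef, hgdef]; ring
  refine ⟨?_, ?_, ?_⟩
  · intro t
    rw [hq]
    exact ((hpolyd t).differentiableAt).sub (hfdiff t)
  · rw [hq, deriv_fun_sub (hpolyd 0).differentiableAt (hfdiff 0), (hpolyd 0).deriv, hdf0]
    simp
  · have heq : (fun t : ℝ => (lam * |t| - ρ t) - mu / 2 * t ^ 2) = fun t => -(f t) := by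
      funext t; simp only [hfdef, hgdef]; ring
    rw [heq]
    exact hfconv.neg
end

section
/- Fix λ > 0 and a > 2. The SCAD penalty ρ : ℝ → ℝ defined by ρ(t) = λ|t| for |t| ≤ λ, ρ(t) = −(t² − 2aλ|t| + λ²)/(2(a−1)) for λ < |t| ≤ aλ, and ρ(t) = (a+1)λ²/2 for |t| > aλ, is (μ, γ)-amenable with μ = 1/(a−1) and γ = a. -/
open scoped BigOperators

/-- `ρ` is `(μ, γ)`-amenable: `μ`-amenable and in addition `ρ'(t) = 0` for all `t ≥ γλ`. -/
structure AmenableG (lam mu gam : ℝ) (ρ : ℝ → ℝ) extends Amenable lam mu ρ : Prop where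
  gam_pos : 0 < gam
  unbiased : ∀ t : ℝ, gam * lam ≤ t → deriv ρ t = 0

/-- The SCAD penalty with parameters `λ > 0` and `a > 2`. -/
noncomputable def scad (lam a : ℝ) (t : ℝ) : ℝ :=
  if |t| ≤ lam then lam * |t|
  else if |t| ≤ a * lam then -(t ^ 2 - 2 * a * lam * |t| + lam ^ 2) / (2 * (a - 1))
  else (a + 1) * lam ^ 2 / 2

namespace ScadAux

open Set Filter

/-- The derivative of the SCAD penalty on `(0, ∞)`, written in min/max form. -/
noncomputable def scadD (lam a t : ℝ) : ℝ := min lam (max ((a * lam - t) / (a - 1)) 0)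

variable {lam a : ℝ}

lemma scad_even (t : ℝ) : scad lam a (-t) = scad lam a t := by
  simp [scad, abs_neg]

lemma scad_comp_neg : scad lam a ∘ Neg.neg = scad lam a :=
  funext fun s => scad_even s

section

variable (hlam : 0 < lam) (ha : 2 < a)
include hlam ha

lemma ha1 : (0:ℝ) < a - 1 := by linarith

lemma scad_eq_low {t : ℝ} (ht : |t| ≤ lam) : scad lam a t = lam * |t| := by
  simp [scad, ht]

lemma scad_eq_mid {t : ℝ} (h1 : lam ≤ t) (h2 : t ≤ a * lam) :
    scad lam a t = -(t ^ 2 - 2 * a * lam * t + lam ^ 2) / (2 * (a - 1)) := by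
  have ht0 : (0:ℝ) < t := lt_of_lt_of_le hlam h1
  have habs : |t| = t := abs_of_pos ht0
  by_cases h : |t| ≤ lam
  · have : t = lam := le_antisymm (habs ▸ h) h1
    subst this
    rw [scad_eq_low hlam ha h, habs]
    have : a - 1 ≠ 0 := ne_of_gt (by linarith)
    field_simp
    ring
  · rw [scad, if_neg h, if_pos (by rw [habs]; exact h2), habs]

lemma scad_eq_top {t : ℝ} (h : a * lam ≤ t) : scad lam a t = (a + 1) * lam ^ 2 / 2 := by
  have ht0 : (0:ℝ) < t := lt_of_lt_of_le (by nlinarith) h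
  have habs : |t| = t := abs_of_pos ht0
  by_cases h1 : |t| ≤ lam
  · exfalso; rw [habs] at h1; nlinarith
  by_cases h2 : |t| ≤ a * lam
  · have : t = a * lam := le_antisymm (habs ▸ h2) h
    subst this
    rw [scad, if_neg h1, if_pos h2, habs]
    have : a - 1 ≠ 0 := ne_of_gt (by linarith)
    field_simp
    ring
  · rw [scad, if_neg h1, if_neg h2]

lemma scadD_eval1 {t : ℝ} (ht : t ≤ lam) : scadD lam a t = lam := by
  have h : lam ≤ (a * lam - t) / (a - 1) := by
    rw [le_div_iff₀ (ha1 hlam ha)]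
    nlinarith
  exact min_eq_left (h.trans (le_max_left _ _))

lemma scadD_eval2 {t : ℝ} (h1 : lam ≤ t) (h2 : t ≤ a * lam) :
    scadD lam a t = (a * lam - t) / (a - 1) := by
  have hnn : (0:ℝ) ≤ (a * lam - t) / (a - 1) :=
    div_nonneg (by linarith) (le_of_lt (ha1 hlam ha))
  have hle : (a * lam - t) / (a - 1) ≤ lam := by
    rw [div_le_iff₀ (ha1 hlam ha)]
    nlinarith
  rw [scadD, max_eq_left hnn, min_eq_right hle]

lemma scadD_eval3 {t : ℝ} (ht : a * lam ≤ t) : scadD lam a t = 0 := by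
  have h : (a * lam - t) / (a - 1) ≤ 0 :=
    div_nonpos_of_nonpos_of_nonneg (by linarith) (le_of_lt (ha1 hlam ha))
  rw [scadD, max_eq_right h, min_eq_right hlam.le]

lemma scadD_nonneg (t : ℝ) : 0 ≤ scadD lam a t :=
  le_min hlam.le (le_max_right _ _)

/-- derivative of the middle quadratic piece -/
lemma mid_hasDerivAt (t : ℝ) :
    HasDerivAt (fun s : ℝ => -(s ^ 2 - 2 * a * lam * s + lam ^ 2) / (2 * (a - 1)))
      ((a * lam - t) / (a - 1)) t := by
  have h1 : HasDerivAt (fun s : ℝ => s ^ 2) (2 * t) t := by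
    simpa using hasDerivAt_pow 2 t
  have h2 : HasDerivAt (fun s : ℝ => 2 * a * lam * s) (2 * a * lam) t := by
    simpa using (hasDerivAt_id t).const_mul (2 * a * lam)
  have h3 := (((h1.sub h2).add_const (lam ^ 2)).neg).div_const (2 * (a - 1))
  refine h3.congr_deriv ?_
  have : a - 1 ≠ 0 := ne_of_gt (ha1 hlam ha)
  field_simp
  ring

lemma scad_hasDerivAt_pos {t : ℝ} (ht : 0 < t) :
    HasDerivAt (scad lam a) (scadD lam a t) t := by
  have ha1' := ha1 hlam ha
  have hllt : lam < a * lam := by nlinarith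
  rcases lt_trichotomy t lam with h | h | h
  · -- 0 < t < lam
    rw [scadD_eval1 hlam ha h.le]
    have base : HasDerivAt (fun s : ℝ => lam * s) lam t := by
      simpa using (hasDerivAt_id t).const_mul lam
    apply base.congr_of_eventuallyEq
    filter_upwards [Ioo_mem_nhds ht h] with s hs
    rw [scad_eq_low hlam ha (by rw [abs_of_pos hs.1]; exact hs.2.le), abs_of_pos hs.1]
  · -- t = lam : glue
    subst h
    rw [scadD_eval1 hlam ha le_rfl]
    have hL : HasDerivWithinAt (scad t a) t (Iic t) t := by
      have base : HasDerivAt (fun s : ℝ => t * s) t t := by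
        simpa using (hasDerivAt_id t).const_mul t
      refine base.hasDerivWithinAt.congr_of_eventuallyEq ?_ ?_
      · filter_upwards [self_mem_nhdsWithin,
          mem_nhdsWithin_of_mem_nhds (Ioi_mem_nhds ht)] with s hs1 hs2
        rw [scad_eq_low hlam ha (by rw [abs_of_pos hs2]; exact hs1), abs_of_pos hs2]
      · rw [scad_eq_low hlam ha (le_of_eq (abs_of_pos ht)), abs_of_pos ht]
    have hR : HasDerivWithinAt (scad t a) t (Ici t) t := by
      have base := mid_hasDerivAt hlam ha (lam := t) (a := a) t
      have hd : (a * t - t) / (a - 1) = t := by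
        field_simp
      rw [hd] at base
      refine base.hasDerivWithinAt.congr_of_eventuallyEq ?_ ?_
      · filter_upwards [self_mem_nhdsWithin,
          mem_nhdsWithin_of_mem_nhds (Iio_mem_nhds hllt)] with s hs1 hs2
        exact scad_eq_mid hlam ha hs1 hs2.le
      · exact scad_eq_mid hlam ha le_rfl hllt.le
    have hU := hL.union hR
    rw [Iic_union_Ici] at hU
    exact hasDerivWithinAt_univ.mp hU
  rcases lt_trichotomy t (a * lam) with h' | h' | h'
  · -- lam < t < a*lam
    rw [scadD_eval2 hlam ha h.le h'.le]
    apply (mid_hasDerivAt hlam ha t).congr_of_eventuallyEq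
    filter_upwards [Ioo_mem_nhds h h'] with s hs
    exact scad_eq_mid hlam ha hs.1.le hs.2.le
  · -- t = a * lam : glue
    subst h'
    rw [scadD_eval3 hlam ha le_rfl]
    have hL : HasDerivWithinAt (scad lam a) 0 (Iic (a * lam)) (a * lam) := by
      have base := mid_hasDerivAt hlam ha (lam := lam) (a := a) (a * lam)
      rw [sub_self, zero_div] at base
      refine base.hasDerivWithinAt.congr_of_eventuallyEq ?_ ?_
      · filter_upwards [self_mem_nhdsWithin,
          mem_nhdsWithin_of_mem_nhds (Ioi_mem_nhds hllt)] with s hs1 hs2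
        exact scad_eq_mid hlam ha hs2.le hs1
      · exact scad_eq_mid hlam ha hllt.le le_rfl
    have hR : HasDerivWithinAt (scad lam a) 0 (Ici (a * lam)) (a * lam) := by
      refine (hasDerivAt_const (a * lam) ((a + 1) * lam ^ 2 / 2)).hasDerivWithinAt.congr
        (fun s hs => scad_eq_top hlam ha hs) (scad_eq_top hlam ha le_rfl)
    have hU := hL.union hR
    rw [Iic_union_Ici] at hU
    exact hasDerivWithinAt_univ.mp hU
  · -- t > a * lam
    rw [scadD_eval3 hlam ha h'.le]
    apply (hasDerivAt_const t ((a + 1) * lam ^ 2 / 2)).congr_of_eventuallyEq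
    filter_upwards [Ioi_mem_nhds h'] with s hs
    exact scad_eq_top hlam ha hs.le

lemma scad_hasDerivAt_neg {t : ℝ} (ht : t < 0) :
    HasDerivAt (scad lam a) (-(scadD lam a (-t))) t := by
  have h := scad_hasDerivAt_pos hlam ha (t := -t) (by linarith)
  have hc := h.comp t (hasDerivAt_neg t)
  rw [scad_comp_neg] at hc
  simpa using hc

lemma scad_differentiableAt {t : ℝ} (ht : t ≠ 0) :
    DifferentiableAt ℝ (scad lam a) t := by
  rcases ht.lt_or_gt with h | h
  · exact (scad_hasDerivAt_neg hlam ha h).differentiableAt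
  · exact (scad_hasDerivAt_pos hlam ha h).differentiableAt

lemma scad_deriv_pos {t : ℝ} (ht : 0 < t) :
    deriv (scad lam a) t = scadD lam a t :=
  (scad_hasDerivAt_pos hlam ha ht).deriv

lemma scad_continuous : Continuous (scad lam a) := by
  rw [continuous_iff_continuousAt]
  intro t
  rcases eq_or_ne t 0 with rfl | ht
  · have hc : ContinuousAt (fun s : ℝ => lam * |s|) 0 := by fun_prop
    apply hc.congr
    filter_upwards [Ioo_mem_nhds (show -lam < (0:ℝ) by linarith) hlam] with s hs
    exact (scad_eq_low hlam ha (abs_le.mpr ⟨hs.1.le, hs.2.le⟩)).symm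
  · exact (scad_differentiableAt hlam ha ht).continuousAt

end

end ScadAux

/-- the SCAD penalty is `(μ, γ)`-amenable with `μ = 1/(a−1)` and `γ = a`. -/
theorem scad_amenable (lam a : ℝ) (hlam : 0 < lam) (ha : 2 < a) :
    AmenableG lam (1 / (a - 1)) a (scad lam a) := by
  open Set Filter ScadAux in
  have ha1' : (0:ℝ) < a - 1 := by linarith
  have hzero : scad lam a 0 = 0 := by
    rw [scad_eq_low hlam ha (by simp [hlam.le])]
    simp
  have hmono : MonotoneOn (scad lam a) (Set.Ici (0:ℝ)) := by
    apply monotoneOn_of_deriv_nonneg (convex_Ici 0)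
      (scad_continuous hlam ha).continuousOn
    · rw [interior_Ici]
      exact fun x hx => (scad_differentiableAt hlam ha (ne_of_gt hx)).differentiableWithinAt
    · rw [interior_Ici]
      intro x hx
      rw [scad_deriv_pos hlam ha hx]
      exact scadD_nonneg hlam ha x
  have hconc : ConcaveOn ℝ (Set.Ici (0:ℝ)) (scad lam a) := by
    apply AntitoneOn.concaveOn_of_deriv (convex_Ici 0)
      (scad_continuous hlam ha).continuousOn
    · rw [interior_Ici]
      exact fun x hx => (scad_differentiableAt hlam ha (ne_of_gt hx)).differentiableWithinAt
    · rw [interior_Ici]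
      intro x hx y hy hxy
      rw [scad_deriv_pos hlam ha hx, scad_deriv_pos hlam ha hy]
      apply min_le_min le_rfl
      apply max_le_max _ le_rfl
      gcongr
  refine { symm := scad_even, zero := hzero, mono := hmono, ratio := ?_, diff := ?_,
           conv := ?_, deriv_lim := ?_, gam_pos := by linarith, unbiased := ?_ }
  · -- ratio
    intro x hx y hy hxy
    simp only [Set.mem_Ioi] at hx hy
    rcases eq_or_lt_of_le hxy with rfl | hlt
    · exact le_rfl
    have hxy0 : x / y ≤ 1 := (div_le_one hy).mpr hxy
    have key := hconc.2 (Set.self_mem_Ici (a := (0:ℝ))) (Set.mem_Ici.mpr hy.le)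
      (show (0:ℝ) ≤ 1 - x / y by linarith)
      (show (0:ℝ) ≤ x / y by positivity)
      (show (1 - x / y) + x / y = 1 by ring)
    simp only [smul_eq_mul, mul_zero, hzero, smul_zero, zero_add] at key
    rw [div_mul_cancel₀ _ (ne_of_gt hy)] at key
    -- key : x / y * scad lam a y ≤ scad lam a x
    rw [div_le_div_iff₀ hy hx]
    have := mul_le_mul_of_nonneg_right key hy.le
    calc scad lam a y * x = x / y * scad lam a y * y := by field_simp
      _ ≤ scad lam a x * y := this
  · exact fun t ht => scad_differentiableAt hlam ha ht
  · -- convexity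
    set g : ℝ → ℝ := fun t => scad lam a t + 1 / (a - 1) / 2 * t ^ 2 with hg
    have hg_deriv : ∀ t : ℝ, 0 < t → HasDerivAt g (scadD lam a t + t / (a - 1)) t := by
      intro t ht
      have h2 : HasDerivAt (fun s : ℝ => 1 / (a - 1) / 2 * s ^ 2) (t / (a - 1)) t := by
        have := (hasDerivAt_pow 2 t).const_mul (1 / (a - 1) / 2)
        refine this.congr_deriv ?_
        field_simp
        ring
      exact (scad_hasDerivAt_pos hlam ha ht).add h2
    have hgcont : Continuous g := by
      apply (scad_continuous hlam ha).add
      fun_prop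
    have hkey : ∀ t : ℝ, scadD lam a t + t / (a - 1)
        = min (lam + t / (a - 1)) (max (a * lam / (a - 1)) (t / (a - 1))) := by
      intro t
      rw [scadD, ← min_add_add_right, ← max_add_add_right]
      congr 2
      · rw [← add_div]; ring_nf
      · rw [zero_add]
    have hGmono : Monotone (fun t : ℝ =>
        min (lam + t / (a - 1)) (max (a * lam / (a - 1)) (t / (a - 1)))) := by
      intro x y hxy
      apply min_le_min
      · gcongr
      · apply max_le_max le_rfl
        gcongr
    have hgderiv_eq : ∀ t : ℝ, 0 < t → deriv g t = scadD lam a t + t / (a - 1) :=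
      fun t ht => (hg_deriv t ht).deriv
    have hgconv : ConvexOn ℝ (Set.Ici (0:ℝ)) g := by
      apply MonotoneOn.convexOn_of_deriv (convex_Ici 0) hgcont.continuousOn
      · rw [interior_Ici]
        exact fun x hx => (hg_deriv x hx).differentiableAt.differentiableWithinAt
      · rw [interior_Ici]
        intro x hx y hy hxy
        rw [hgderiv_eq x hx, hgderiv_eq y hy, hkey x, hkey y]
        exact hGmono hxy
    have hgmono : MonotoneOn g (Set.Ici (0:ℝ)) := by
      apply monotoneOn_of_deriv_nonneg (convex_Ici 0) hgcont.continuousOn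
      · rw [interior_Ici]
        exact fun x hx => (hg_deriv x hx).differentiableAt.differentiableWithinAt
      · rw [interior_Ici]
        intro x hx
        rw [hgderiv_eq x hx]
        have h1 := scadD_nonneg hlam ha (a := a) x
        have h2 : 0 ≤ x / (a - 1) := div_nonneg hx.le ha1'.le
        exact add_nonneg h1 h2
    have habs : ConvexOn ℝ Set.univ (fun x : ℝ => |x|) := by
      refine ⟨convex_univ, fun x _ y _ p q hp hq hpq => ?_⟩
      simp only [smul_eq_mul]
      calc |p * x + q * y| ≤ |p * x| + |q * y| := abs_add_le _ _
        _ = p * |x| + q * |y| := by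
            rw [abs_mul, abs_mul, abs_of_nonneg hp, abs_of_nonneg hq]
    have himg : (fun x : ℝ => |x|) '' Set.univ = Set.Ici (0:ℝ) := by
      ext x
      simp only [Set.image_univ, Set.mem_range, Set.mem_Ici]
      constructor
      · rintro ⟨y, rfl⟩; exact abs_nonneg y
      · intro h; exact ⟨x, abs_of_nonneg h⟩
    have hcomp : ConvexOn ℝ Set.univ (g ∘ fun x : ℝ => |x|) := by
      apply ConvexOn.comp _ habs
      · rw [himg]; exact hgmono
      · rw [himg]; exact hgconv
    have hfun : (g ∘ fun x : ℝ => |x|) = fun t => scad lam a t + 1 / (a - 1) / 2 * t ^ 2 := by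
      funext t
      simp only [Function.comp, hg]
      rw [sq_abs]
      rcases abs_choice t with h | h
      · rw [h]
      · rw [h, scad_even]
    rw [hfun] at hcomp
    exact hcomp
  · -- deriv_lim
    apply Filter.Tendsto.congr' _ tendsto_const_nhds
    filter_upwards [Ioo_mem_nhdsGT_of_mem (Set.mem_Ico.mpr ⟨le_rfl, hlam⟩)] with t ht
    rw [scad_deriv_pos hlam ha ht.1, scadD_eval1 hlam ha ht.2.le]
  · -- unbiased
    intro t ht
    have ht0 : 0 < t := lt_of_lt_of_le (by nlinarith) ht
    rw [scad_deriv_pos hlam ha ht0, scadD_eval3 hlam ha ht]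
end

section
/- Fix λ > 0. The log-sum penalty ρ : ℝ → ℝ defined by ρ(t) = log(1 + λ|t|) is λ²-amenable; in particular, for t > 0 one has ρ'(t) = λ/(1 + λt) and ρ''(t) = −λ²/(1 + λt)². -/
open scoped BigOperators

private lemma lsp_hasDeriv (lam : ℝ) (hlam : 0 < lam) {t : ℝ} (ht : 0 < t) :
    HasDerivAt (fun s : ℝ => Real.log (1 + lam * |s|)) (lam / (1 + lam * t)) t := by
  have hpos : (0 : ℝ) < 1 + lam * t := by positivity
  have h0 : HasDerivAt (fun s : ℝ => 1 + lam * s) lam t := by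
    simpa using ((hasDerivAt_id t).const_mul lam).const_add 1
  have h1 : HasDerivAt (fun s : ℝ => Real.log (1 + lam * s)) (lam / (1 + lam * t)) t :=
    h0.log (ne_of_gt hpos)
  apply h1.congr_of_eventuallyEq
  filter_upwards [eventually_gt_nhds ht] with s hs
  rw [abs_of_pos hs]

private lemma lsp_deriv (lam : ℝ) (hlam : 0 < lam) {t : ℝ} (ht : 0 < t) :
    deriv (fun s : ℝ => Real.log (1 + lam * |s|)) t = lam / (1 + lam * t) :=
  (lsp_hasDeriv lam hlam ht).deriv

private lemma lsp_deriv2 (lam : ℝ) (hlam : 0 < lam) {t : ℝ} (ht : 0 < t) :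
    deriv (deriv (fun s : ℝ => Real.log (1 + lam * |s|))) t
      = -lam ^ 2 / (1 + lam * t) ^ 2 := by
  have heq : deriv (fun s : ℝ => Real.log (1 + lam * |s|))
      =ᶠ[nhds t] fun s => lam / (1 + lam * s) := by
    filter_upwards [eventually_gt_nhds ht] with s hs
    exact lsp_deriv lam hlam hs
  rw [heq.deriv_eq]
  have hpos : (0 : ℝ) < 1 + lam * t := by positivity
  have h0 : HasDerivAt (fun s : ℝ => 1 + lam * s) lam t := by
    simpa using ((hasDerivAt_id t).const_mul lam).const_add 1
  have h1 : HasDerivAt (fun s : ℝ => lam / (1 + lam * s))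
      ((0 * (1 + lam * t) - lam * lam) / (1 + lam * t) ^ 2) t :=
    (hasDerivAt_const t lam).div h0 (ne_of_gt hpos)
  have := h1.deriv
  rw [this]; ring

/-- the log-sum penalty `ρ(t) = log(1 + λ|t|)` is `λ²`-amenable; moreover for
`t > 0`, `ρ'(t) = λ/(1 + λt)` and `ρ''(t) = −λ²/(1 + λt)²`. -/
theorem lsp_amenable (lam : ℝ) (hlam : 0 < lam) :
    Amenable lam (lam ^ 2) (fun t => Real.log (1 + lam * |t|)) ∧
    (∀ t : ℝ, 0 < t →
      deriv (fun t => Real.log (1 + lam * |t|)) t = lam / (1 + lam * t) ∧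
      deriv (deriv (fun t => Real.log (1 + lam * |t|))) t = -lam ^ 2 / (1 + lam * t) ^ 2) := by
  constructor
  · constructor
    · intro t; simp
    · simp
    · -- monotone
      intro a ha b hb hab
      simp only [Set.mem_Ici] at ha hb
      have h1 : (0:ℝ) < 1 + lam * |a| := by positivity
      exact Real.log_le_log h1 (by rw [abs_of_nonneg ha, abs_of_nonneg hb]; nlinarith)
    · -- ratio antitone
      intro a ha b hb hab
      simp only [Set.mem_Ioi] at ha hb
      show Real.log (1 + lam * |b|) / b ≤ Real.log (1 + lam * |a|) / a
      rw [abs_of_pos ha, abs_of_pos hb]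
      have hbne : b ≠ 0 := ne_of_gt hb
      have hkey : (a / b) * Real.log (1 + lam * b) ≤ Real.log (1 + lam * a) := by
        have hc := strictConcaveOn_log_Ioi.concaveOn.2
          (x := 1 + lam * b) (y := (1:ℝ))
          (by simp only [Set.mem_Ioi]; positivity) (by norm_num)
          (show (0:ℝ) ≤ a / b by positivity)
          (show (0:ℝ) ≤ 1 - a / b by
            rw [sub_nonneg]; exact div_le_one_of_le₀ hab hb.le)
          (show a / b + (1 - a / b) = 1 by ring)
        have harg : (a / b) • (1 + lam * b) + (1 - a / b) • (1:ℝ) = 1 + lam * a := by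
          simp only [smul_eq_mul]; field_simp; ring
        rw [harg] at hc
        simpa using hc
      rw [div_le_div_iff₀ hb ha]
      calc Real.log (1 + lam * b) * a = ((a / b) * Real.log (1 + lam * b)) * b := by
            field_simp
        _ ≤ Real.log (1 + lam * a) * b := by
            exact mul_le_mul_of_nonneg_right hkey hb.le
    · -- differentiable away from 0
      intro t ht
      rcases ht.lt_or_gt with h | h
      · have hpos : (0 : ℝ) < 1 - lam * t := by nlinarith
        have h0 : HasDerivAt (fun s : ℝ => 1 + lam * -s) (-lam) t := by
          simpa using (((hasDerivAt_id t).neg).const_mul lam).const_add 1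
        have h1 : HasDerivAt (fun s : ℝ => Real.log (1 + lam * -s))
            (-lam / (1 + lam * -t)) t := h0.log (by nlinarith)
        have h2 : HasDerivAt (fun s : ℝ => Real.log (1 + lam * |s|))
            (-lam / (1 + lam * -t)) t := by
          apply h1.congr_of_eventuallyEq
          filter_upwards [eventually_lt_nhds h] with s hs
          rw [abs_of_neg hs]
        exact h2.differentiableAt
      · exact (lsp_hasDeriv lam hlam h).differentiableAt
    · -- convexity
      have habs : ConvexOn ℝ Set.univ (fun t : ℝ => |t|) := by
        exact convexOn_univ_norm (E := ℝ)
      set h : ℝ → ℝ := fun s => Real.log (1 + lam * s) + lam ^ 2 / 2 * s ^ 2 with hh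
      have himg : (fun t : ℝ => |t|) '' Set.univ ⊆ Set.Ici 0 := by
        rintro x ⟨y, -, rfl⟩; exact abs_nonneg y
      have hmono : MonotoneOn h (Set.Ici (0:ℝ)) := by
        intro a ha b hb hab
        simp only [Set.mem_Ici] at ha hb
        have : Real.log (1 + lam * a) ≤ Real.log (1 + lam * b) :=
          Real.log_le_log (by positivity) (by nlinarith)
        have h2 : lam ^ 2 / 2 * a ^ 2 ≤ lam ^ 2 / 2 * b ^ 2 := by
          have hsq : a ^ 2 ≤ b ^ 2 := pow_le_pow_left₀ ha hab 2
          nlinarith [sq_nonneg lam]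
        simp only [hh]; linarith
      have hconv : ConvexOn ℝ (Set.Ici (0:ℝ)) h := by
        have hint : interior (Set.Ici (0:ℝ)) = Set.Ioi 0 := interior_Ici
        apply convexOn_of_hasDerivWithinAt2_nonneg (convex_Ici 0)
          (f' := fun s => lam / (1 + lam * s) + lam ^ 2 * s)
          (f'' := fun s => -lam ^ 2 / (1 + lam * s) ^ 2 + lam ^ 2)
        · apply ContinuousOn.add
          · apply ContinuousOn.log
            · fun_prop
            · intro x hx
              simp only [Set.mem_Ici] at hx; positivity
          · fun_prop
        · intro x hx
          rw [hint] at hx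
          simp only [Set.mem_Ioi] at hx
          have hpos : (0:ℝ) < 1 + lam * x := by positivity
          have h0 : HasDerivAt (fun s : ℝ => 1 + lam * s) lam x := by
            simpa using ((hasDerivAt_id x).const_mul lam).const_add 1
          have h1 : HasDerivAt h (lam / (1 + lam * x) + lam ^ 2 / 2 * (2 * x)) x := by
            exact (h0.log (ne_of_gt hpos)).add
              (((hasDerivAt_pow 2 x).const_mul (lam ^ 2 / 2)).congr_deriv (by ring))
          have h1' : HasDerivAt h (lam / (1 + lam * x) + lam ^ 2 * x) x := by
            convert h1 using 1; ring
          exact h1'.hasDerivWithinAt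
        · intro x hx
          rw [hint] at hx
          simp only [Set.mem_Ioi] at hx
          have hpos : (0:ℝ) < 1 + lam * x := by positivity
          have h0 : HasDerivAt (fun s : ℝ => 1 + lam * s) lam x := by
            simpa using ((hasDerivAt_id x).const_mul lam).const_add 1
          have h1 : HasDerivAt (fun s : ℝ => lam / (1 + lam * s) + lam ^ 2 * s)
              ((0 * (1 + lam * x) - lam * lam) / (1 + lam * x) ^ 2 + lam ^ 2) x := by
            exact ((hasDerivAt_const x lam).div h0 (ne_of_gt hpos)).add
              (((hasDerivAt_id x).const_mul (lam ^ 2)).congr_deriv (by ring))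
          have h1' : HasDerivAt (fun s : ℝ => lam / (1 + lam * s) + lam ^ 2 * s)
              (-lam ^ 2 / (1 + lam * x) ^ 2 + lam ^ 2) x := by
            convert h1 using 1; ring
          exact h1'.hasDerivWithinAt
        · intro x hx
          rw [hint] at hx
          simp only [Set.mem_Ioi] at hx
          have h1 : (1:ℝ) ≤ 1 + lam * x := by nlinarith
          have h2 : (1:ℝ) ≤ (1 + lam * x) ^ 2 := by nlinarith
          have h3 : lam ^ 2 / (1 + lam * x) ^ 2 ≤ lam ^ 2 := by
            rw [div_le_iff₀ (by positivity)]; nlinarith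
          have : -lam ^ 2 / (1 + lam * x) ^ 2 + lam ^ 2
              = lam ^ 2 - lam ^ 2 / (1 + lam * x) ^ 2 := by ring
          rw [this]; linarith
      have himg' : (fun t : ℝ => |t|) '' Set.univ = Set.Ici 0 := by
        ext x
        constructor
        · rintro ⟨y, -, rfl⟩; exact abs_nonneg y
        · intro hx; exact ⟨x, trivial, abs_of_nonneg hx⟩
      have hcomp : ConvexOn ℝ Set.univ (h ∘ fun t : ℝ => |t|) := by
        apply ConvexOn.comp _ habs
        · rw [himg']; exact hmono
        · rw [himg']; exact hconv
      have heq : (fun t : ℝ => Real.log (1 + lam * |t|) + lam ^ 2 / 2 * t ^ 2)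
          = h ∘ fun t : ℝ => |t| := by
        funext t
        simp only [Function.comp, hh, sq_abs]
      rw [heq]
      exact hcomp
    · -- deriv limit
      have heq : deriv (fun s : ℝ => Real.log (1 + lam * |s|))
          =ᶠ[nhdsWithin 0 (Set.Ioi 0)] fun t => lam / (1 + lam * t) := by
        filter_upwards [self_mem_nhdsWithin] with t ht
        exact lsp_deriv lam hlam ht
      rw [Filter.tendsto_congr' heq]
      have hcont : ContinuousAt (fun t : ℝ => lam / (1 + lam * t)) 0 := by
        apply ContinuousAt.div
        · fun_prop
        · fun_prop
        · norm_num
      have := hcont.tendsto.mono_left (nhdsWithin_le_nhds (s := Set.Ioi (0:ℝ)))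
      simpa using this
  · intro t ht
    exact ⟨lsp_deriv lam hlam ht, lsp_deriv2 lam hlam ht⟩
end

section
/- Let p, n, k be positive integers with p ≥ 2, let S ⊆ {1,…,p} with |S| = k, and let L : ℝ^p → ℝ be twice continuously differentiable and satisfy the local RSC inequality with parameters α₁ > 0 and τ₁ ≥ 0: ⟨∇L(β+Δ) − ∇L(β), Δ⟩ ≥ α₁‖Δ‖₂² − τ₁ (log p / n)‖Δ‖₁² for all β ∈ ℝ^p and all Δ with ‖Δ‖₂ ≤ 1. Then: (1) for every β ∈ ℝ^p and every v ∈ ℝ^p with supp(v) ⊆ S and ‖v‖₂ = 1, one has vᵀ (∇²L(β)) v ≥ α₁ − τ₁ k (log p)/n. (2) Consequently, if ρ : ℝ → ℝ is μ-amenable with μ < α₁ and n ≥ (2τ₁/(α₁ − μ)) · k log p, then the function β ↦ L(β) − (μ/2)‖β‖₂² is strictly convex on the subspace {β ∈ ℝ^p : supp(β) ⊆ S}, and the restricted objective β ↦ L(β) + Σ_{j=1}^p ρ(β_j) is strictly convex on {β ∈ ℝ^p : supp(β) ⊆ S}. -/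
open scoped BigOperators

open scoped RealInnerProductSpace

/-- The ℓ₁-norm on `ℝ^p`. -/
noncomputable def norm1 {p : ℕ} (x : EuclideanSpace ℝ (Fin p)) : ℝ := ∑ j, |x j|

/-! ### Auxiliary lemmas -/

lemma norm_sq_eq_sum' {p : ℕ} (x : EuclideanSpace ℝ (Fin p)) :
    ‖x‖ ^ 2 = ∑ j, (x j) ^ 2 := by
  rw [EuclideanSpace.norm_eq, Real.sq_sqrt (by positivity)]
  simp [sq_abs]

lemma norm1_sq_le {p : ℕ} (S : Finset (Fin p)) (x : EuclideanSpace ℝ (Fin p))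
    (hx : ∀ j ∉ S, x j = 0) : (norm1 x) ^ 2 ≤ S.card * ‖x‖ ^ 2 := by
  have h1 : norm1 x = ∑ j ∈ S, |x j| := by
    rw [norm1, ← Finset.sum_subset (Finset.subset_univ S)]
    intro j _ hj; simp [hx j hj]
  rw [h1, norm_sq_eq_sum']
  calc (∑ j ∈ S, |x j|) ^ 2 ≤ S.card * ∑ j ∈ S, |x j| ^ 2 := sq_sum_le_card_mul_sum_sq
    _ ≤ S.card * ∑ j, (x j) ^ 2 := by
        gcongr
        · exact Finset.sum_le_sum_of_subset_of_nonneg (Finset.subset_univ S)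
            (fun j _ _ => by positivity) |>.trans_eq (by simp [sq_abs])

lemma inner_gradient {p : ℕ} (f : EuclideanSpace ℝ (Fin p) → ℝ) (z v : EuclideanSpace ℝ (Fin p)) :
    ⟪gradient f z, v⟫ = fderiv ℝ f z v :=
  InnerProductSpace.toDual_symm_apply

lemma hasDerivAt_line {p : ℕ} {f : EuclideanSpace ℝ (Fin p) → ℝ} (hf : Differentiable ℝ f)
    (x v : EuclideanSpace ℝ (Fin p)) (t : ℝ) :
    HasDerivAt (fun s : ℝ => f (x + s • v)) (⟪gradient f (x + t • v), v⟫) t := by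
  rw [inner_gradient]
  have hline : HasDerivAt (fun s : ℝ => x + s • v) v t := by
    simpa using ((hasDerivAt_id t).smul_const v).const_add x
  exact (hf (x + t • v)).hasFDerivAt.comp_hasDerivAt t hline

/-- RSC plus the support/Cauchy–Schwarz bound, for `‖Δ‖ ≤ 1`. -/
lemma rsc_step {p n : ℕ} (S : Finset (Fin p)) (L : EuclideanSpace ℝ (Fin p) → ℝ)
    (α₁ τ₁ : ℝ) (hτ₁ : 0 ≤ τ₁) (hlog : 0 ≤ Real.log p)
    (hRSC : ∀ β Δ : EuclideanSpace ℝ (Fin p), ‖Δ‖ ≤ 1 →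
      α₁ * ‖Δ‖ ^ 2 - τ₁ * (Real.log p / n) * (norm1 Δ) ^ 2 ≤
        ⟪gradient L (β + Δ) - gradient L β, Δ⟫)
    (β Δ : EuclideanSpace ℝ (Fin p)) (hsupp : ∀ j ∉ S, Δ j = 0) (hΔ : ‖Δ‖ ≤ 1) :
    (α₁ - τ₁ * S.card * Real.log p / n) * ‖Δ‖ ^ 2 ≤
      ⟪gradient L (β + Δ) - gradient L β, Δ⟫ := by
  refine le_trans ?_ (hRSC β Δ hΔ)
  have h1 : (norm1 Δ) ^ 2 ≤ S.card * ‖Δ‖ ^ 2 := norm1_sq_le S Δ hsupp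
  have h2 : τ₁ * (Real.log p / n) * (norm1 Δ) ^ 2 ≤
      τ₁ * (Real.log p / n) * (S.card * ‖Δ‖ ^ 2) := by
    apply mul_le_mul_of_nonneg_left h1 (by positivity)
  have h3 : (α₁ - τ₁ * S.card * Real.log p / n) * ‖Δ‖ ^ 2 =
      α₁ * ‖Δ‖ ^ 2 - τ₁ * (Real.log p / n) * (S.card * ‖Δ‖ ^ 2) := by ring
  rw [h3]; linarith

/-- Global restricted strong monotonicity of the gradient, by splitting a segment
into pieces of norm at most one. -/
lemma key_mono {p n : ℕ} (S : Finset (Fin p)) (L : EuclideanSpace ℝ (Fin p) → ℝ)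
    (α₁ τ₁ : ℝ) (hτ₁ : 0 ≤ τ₁) (hlog : 0 ≤ Real.log p)
    (hRSC : ∀ β Δ : EuclideanSpace ℝ (Fin p), ‖Δ‖ ≤ 1 →
      α₁ * ‖Δ‖ ^ 2 - τ₁ * (Real.log p / n) * (norm1 Δ) ^ 2 ≤
        ⟪gradient L (β + Δ) - gradient L β, Δ⟫)
    (β Δ : EuclideanSpace ℝ (Fin p)) (hsupp : ∀ j ∉ S, Δ j = 0) :
    (α₁ - τ₁ * S.card * Real.log p / n) * ‖Δ‖ ^ 2 ≤
      ⟪gradient L (β + Δ) - gradient L β, Δ⟫ := by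
  set c := α₁ - τ₁ * S.card * Real.log p / n with hc
  obtain ⟨N, hN⟩ : ∃ N : ℕ, ‖Δ‖ ≤ N ∧ 0 < N :=
    ⟨⌈‖Δ‖⌉₊ + 1, le_trans (Nat.le_ceil _) (by push_cast; linarith), Nat.succ_pos _⟩
  obtain ⟨hN1, hN0⟩ := hN
  have hNR : (0 : ℝ) < N := by exact_mod_cast hN0
  set δ : EuclideanSpace ℝ (Fin p) := (N : ℝ)⁻¹ • Δ with hδ
  have hδnorm : ‖δ‖ = ‖Δ‖ / N := by
    rw [hδ, norm_smul]; simp [abs_of_pos (inv_pos.mpr hNR), div_eq_inv_mul]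
  have hδle : ‖δ‖ ≤ 1 := by rw [hδnorm]; exact div_le_one_of_le₀ hN1 hNR.le
  have hδsupp : ∀ j ∉ S, δ j = 0 := fun j hj => by simp [hδ, hsupp j hj]
  have hΔδ : Δ = (N : ℝ) • δ := by rw [hδ, smul_smul, mul_inv_cancel₀ hNR.ne', one_smul]
  set g : ℕ → EuclideanSpace ℝ (Fin p) := fun i => gradient L (β + (i : ℝ) • δ) with hg
  have htel : ∑ i ∈ Finset.range N, (g (i + 1) - g i) = g N - g 0 := Finset.sum_range_sub g N
  have hg0 : g 0 = gradient L β := by simp [hg]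
  have hgN : g N = gradient L (β + Δ) := by
    show gradient L (β + (N : ℝ) • δ) = _; rw [← hΔδ]
  have hstep : ∀ i, c * ‖Δ‖ ^ 2 / N ≤ ⟪g (i + 1) - g i, Δ⟫ := by
    intro i
    have harg : β + ((i : ℕ) + 1 : ℝ) • δ = (β + (i : ℝ) • δ) + δ := by
      rw [add_smul, one_smul, add_assoc]
    have hstep1 : c * ‖δ‖ ^ 2 ≤ ⟪g (i + 1) - g i, δ⟫ := by
      have := rsc_step S L α₁ τ₁ hτ₁ hlog hRSC (β + (i : ℝ) • δ) δ hδsupp hδle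
      simpa [hg, harg] using this
    have : ⟪g (i + 1) - g i, Δ⟫ = N * ⟪g (i + 1) - g i, δ⟫ := by
      rw [hΔδ, real_inner_smul_right]
    rw [this]
    have h2 : c * ‖Δ‖ ^ 2 / N = N * (c * ‖δ‖ ^ 2) := by
      rw [hδnorm]; field_simp
    rw [h2]
    exact mul_le_mul_of_nonneg_left hstep1 hNR.le
  have hsum : c * ‖Δ‖ ^ 2 ≤ ∑ i ∈ Finset.range N, ⟪g (i + 1) - g i, Δ⟫ := by
    calc c * ‖Δ‖ ^ 2 = ∑ _i ∈ Finset.range N, c * ‖Δ‖ ^ 2 / N := by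
          rw [Finset.sum_const, Finset.card_range, nsmul_eq_mul]
          field_simp
      _ ≤ _ := Finset.sum_le_sum fun i _ => hstep i
  calc c * ‖Δ‖ ^ 2 ≤ ∑ i ∈ Finset.range N, ⟪g (i + 1) - g i, Δ⟫ := hsum
    _ = ⟪∑ i ∈ Finset.range N, (g (i + 1) - g i), Δ⟫ := (sum_inner _ _ _).symm
    _ = ⟪gradient L (β + Δ) - gradient L β, Δ⟫ := by rw [htel, hg0, hgN]

set_option maxHeartbeats 2000000 in
/-- under the local RSC inequality, (1) the Hessian quadratic form on unit
vectors supported on `S` is bounded below by `α₁ − τ₁ k log p / n`; (2) if `ρ` is `μ`-amenable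
with `μ < α₁` and `n ≥ (2τ₁/(α₁ − μ)) k log p`, then `β ↦ L β − μ/2 ‖β‖²` and the restricted
objective `β ↦ L β + Σⱼ ρ(βⱼ)` are strictly convex on `{β : supp β ⊆ S}`. -/
theorem restricted_strict_convexity (p n k : ℕ) (hp : 2 ≤ p) (hn : 0 < n) (hk : 0 < k)
    (S : Finset (Fin p)) (hS : S.card = k)
    (L : EuclideanSpace ℝ (Fin p) → ℝ) (hL : ContDiff ℝ 2 L)
    (α₁ τ₁ : ℝ) (hα₁ : 0 < α₁) (hτ₁ : 0 ≤ τ₁)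
    (hRSC : ∀ β Δ : EuclideanSpace ℝ (Fin p), ‖Δ‖ ≤ 1 →
      α₁ * ‖Δ‖ ^ 2 - τ₁ * (Real.log p / n) * (norm1 Δ) ^ 2 ≤
        ⟪gradient L (β + Δ) - gradient L β, Δ⟫) :
    (∀ (β v : EuclideanSpace ℝ (Fin p)), (∀ j ∉ S, v j = 0) → ‖v‖ = 1 →
      α₁ - τ₁ * k * Real.log p / n ≤ iteratedFDeriv ℝ 2 L β ![v, v]) ∧
    (∀ (lam mu : ℝ) (ρ : ℝ → ℝ), 0 < lam → 0 ≤ mu → Amenable lam mu ρ → mu < α₁ →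
      2 * τ₁ / (α₁ - mu) * (k * Real.log p) ≤ n →
      StrictConvexOn ℝ {β : EuclideanSpace ℝ (Fin p) | ∀ j ∉ S, β j = 0}
        (fun β => L β - mu / 2 * ‖β‖ ^ 2) ∧
      StrictConvexOn ℝ {β : EuclideanSpace ℝ (Fin p) | ∀ j ∉ S, β j = 0}
        (fun β => L β + ∑ j, ρ (β j))) := by
  have hlog : 0 ≤ Real.log p := Real.log_nonneg (by exact_mod_cast Nat.one_le_of_lt hp)
  have hnR : (0:ℝ) < n := by exact_mod_cast hn
  have key : ∀ β Δ : EuclideanSpace ℝ (Fin p), (∀ j ∉ S, Δ j = 0) →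
      (α₁ - τ₁ * S.card * Real.log p / n) * ‖Δ‖ ^ 2 ≤
        ⟪gradient L (β + Δ) - gradient L β, Δ⟫ :=
    fun β Δ h => key_mono S L α₁ τ₁ hτ₁ hlog hRSC β Δ h
  constructor
  · -- Part 1: Hessian bound
    intro β v hsupp hv1
    rw [iteratedFDeriv_two_apply]
    show α₁ - τ₁ * k * Real.log p / n ≤ fderiv ℝ (fderiv ℝ L) β v v
    set h : ℝ → ℝ := fun t => fderiv ℝ L (β + t • v) v with hh
    have hdL : Differentiable ℝ (fderiv ℝ L) :=
      (hL.fderiv_right (m := 1) (by norm_num)).differentiable (by norm_num)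
    have hline : HasDerivAt (fun s : ℝ => β + s • v) v 0 := by
      simpa using ((hasDerivAt_id (0:ℝ)).smul_const v).const_add β
    have hD1 : HasDerivAt (fun t : ℝ => fderiv ℝ L (β + t • v))
        (fderiv ℝ (fderiv ℝ L) β v) 0 := by
      have := (hdL (β + (0:ℝ) • v)).hasFDerivAt.comp_hasDerivAt 0 hline
      simp only [zero_smul, add_zero] at this; exact this
    have hD : HasDerivAt h (fderiv ℝ (fderiv ℝ L) β v v) 0 := by
      have := hD1.clm_apply (hasDerivAt_const (0:ℝ) v)
      simpa [hh] using this
    have hquot : ∀ t ∈ Set.Ioc (0:ℝ) 1, α₁ - τ₁ * k * Real.log p / n ≤ slope h 0 t := by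
      intro t ht
      obtain ⟨ht0, ht1⟩ := ht
      have hnorm : ‖t • v‖ = t := by
        rw [norm_smul, hv1, mul_one, Real.norm_eq_abs, abs_of_pos ht0]
      have hrsc := hRSC β (t • v) (by rw [hnorm]; exact ht1)
      have hn1 : (norm1 (t • v)) ^ 2 ≤ t ^ 2 * k := by
        have := norm1_sq_le S (t • v) (fun j hj => by simp [hsupp j hj])
        rw [hnorm, hS] at this; linarith
      have hinner : ⟪gradient L (β + t • v) - gradient L β, t • v⟫ = t * (h t - h 0) := by
        rw [real_inner_smul_right, inner_sub_left, inner_gradient, inner_gradient]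
        simp [hh]
      rw [hinner, hnorm] at hrsc
      have hstep : t ^ 2 * (α₁ - τ₁ * k * Real.log p / n) ≤ t * (h t - h 0) := by
        have h2 : τ₁ * (Real.log p / n) * (norm1 (t • v)) ^ 2 ≤
            τ₁ * (Real.log p / n) * (t ^ 2 * k) := by
          apply mul_le_mul_of_nonneg_left hn1 (by positivity)
        have h3 : t ^ 2 * (α₁ - τ₁ * (k : ℝ) * Real.log p / n) =
            α₁ * t ^ 2 - τ₁ * (Real.log p / n) * (t ^ 2 * k) := by ring
        rw [h3]; linarith
      have : slope h 0 t = (h t - h 0) / t := by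
        rw [slope_def_field]; ring_nf
      rw [this, le_div_iff₀ ht0]
      nlinarith
    have htend : Filter.Tendsto (slope h 0) (nhdsWithin 0 (Set.Ioi 0))
        (nhds (fderiv ℝ (fderiv ℝ L) β v v)) :=
      (hasDerivAt_iff_tendsto_slope.mp hD).mono_left
        (nhdsWithin_mono 0 (fun x hx => ne_of_gt hx))
    refine ge_of_tendsto htend ?_
    filter_upwards [Ioc_mem_nhdsGT_of_mem (Set.left_mem_Ico.mpr one_pos)] with t ht
    exact hquot t ht
  · -- Part 2: strict convexity
    intro lam mu ρ hlam hmu hA hmua hnb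
    set s : Set (EuclideanSpace ℝ (Fin p)) := {β | ∀ j ∉ S, β j = 0} with hs
    have hconv : Convex ℝ s := by
      intro x hx y hy a b ha hb hab
      intro j hj
      have : (a • x + b • y) j = a * x j + b * y j := by
        simp [PiLp.add_apply, PiLp.smul_apply, smul_eq_mul]
      rw [Set.mem_setOf_eq] at hx hy
      simp [this, hx j hj, hy j hj]
    set c : ℝ := α₁ - τ₁ * S.card * Real.log p / n with hc
    have hcmu : mu < c := by
      have hd : 0 < α₁ - mu := by linarith
      have h1 : τ₁ * k * Real.log p ≤ n * (α₁ - mu) / 2 := by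
        have := mul_le_mul_of_nonneg_right hnb (le_of_lt hd)
        calc τ₁ * k * Real.log p = 2 * τ₁ / (α₁ - mu) * (k * Real.log p) * (α₁ - mu) / 2 := by
              field_simp
          _ ≤ n * (α₁ - mu) / 2 := by linarith
      have h2 : τ₁ * S.card * Real.log p / n ≤ (α₁ - mu) / 2 := by
        rw [hS, div_le_div_iff₀ hnR (by norm_num : (0:ℝ) < 2)]
        linarith
      have : (α₁ - mu) / 2 > 0 := by linarith
      rw [hc]; linarith
    have hLdiff : Differentiable ℝ L := hL.differentiable (by norm_num)
    have main : StrictConvexOn ℝ s (fun β => L β - mu / 2 * ‖β‖ ^ 2) := by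
      refine ⟨hconv, ?_⟩
      intro x hx y hy hxy a b ha hb hab
      set v := y - x with hv
      have hvs : ∀ j ∉ S, v j = 0 := by
        intro j hj
        rw [Set.mem_setOf_eq] at hx hy
        simp [hv, hx j hj, hy j hj]
      have hvne : v ≠ 0 := sub_ne_zero.mpr (Ne.symm hxy)
      have hvpos : 0 < ‖v‖ ^ 2 := pow_pos (norm_pos_iff.mpr hvne) 2
      set g : ℝ → ℝ := fun t => L (x + t • v) - mu / 2 * ‖x + t • v‖ ^ 2 with hg
      set G : ℝ → ℝ := fun t => ⟪gradient L (x + t • v), v⟫ - mu * ⟪x + t • v, v⟫ with hG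
      have hgd : ∀ t, HasDerivAt g (G t) t := by
        intro t
        have h1 : HasDerivAt (fun u : ℝ => L (x + u • v)) (⟪gradient L (x + t • v), v⟫) t :=
          hasDerivAt_line hLdiff x v t
        have hline : HasDerivAt (fun u : ℝ => x + u • v) v t := by
          simpa using ((hasDerivAt_id t).smul_const v).const_add x
        have h2 : HasDerivAt (fun u : ℝ => ⟪x + u • v, x + u • v⟫)
            (⟪x + t • v, v⟫ + ⟪v, x + t • v⟫) t := HasDerivAt.inner ℝ hline hline
        have h2' : HasDerivAt (fun u : ℝ => ‖x + u • v‖ ^ 2) (2 * ⟪x + t • v, v⟫) t := by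
          have heq : (fun u : ℝ => ‖x + u • v‖ ^ 2) = fun u : ℝ => ⟪x + u • v, x + u • v⟫ := by
            funext u; rw [real_inner_self_eq_norm_sq]
          rw [heq]
          convert h2 using 1
          rw [real_inner_comm]; ring
        have := h1.sub ((h2'.const_mul (mu / 2)))
        exact this.congr_deriv (by rw [hG]; ring)
      have hGmono : StrictMono G := by
        intro t₁ t₂ hlt
        have hkey := key (x + t₁ • v) ((t₂ - t₁) • v) (fun j hj => by simp [hvs j hj])
        have harg : (x + t₁ • v) + (t₂ - t₁) • v = x + t₂ • v := by
          rw [add_assoc, ← add_smul]; ring_nf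
        rw [harg] at hkey
        have hdiff : ⟪gradient L (x + t₂ • v) - gradient L (x + t₁ • v), (t₂ - t₁) • v⟫ =
            (t₂ - t₁) * (⟪gradient L (x + t₂ • v), v⟫ - ⟪gradient L (x + t₁ • v), v⟫) := by
          rw [real_inner_smul_right, inner_sub_left]
        have hnrm : ‖(t₂ - t₁) • v‖ ^ 2 = (t₂ - t₁) ^ 2 * ‖v‖ ^ 2 := by
          rw [norm_smul, mul_pow, Real.norm_eq_abs, sq_abs]
        rw [hdiff, hnrm] at hkey
        have hts : 0 < t₂ - t₁ := by linarith
        have hDlb : c * (t₂ - t₁) * ‖v‖ ^ 2 ≤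
            ⟪gradient L (x + t₂ • v), v⟫ - ⟪gradient L (x + t₁ • v), v⟫ := by
          refine (mul_le_mul_iff_right₀ hts).mp ?_
          calc (t₂ - t₁) * (c * (t₂ - t₁) * ‖v‖ ^ 2)
              = c * ((t₂ - t₁) ^ 2 * ‖v‖ ^ 2) := by ring
            _ ≤ _ := hkey
        have hid : ⟪x + t₂ • v, v⟫ - ⟪x + t₁ • v, v⟫ = (t₂ - t₁) * ‖v‖ ^ 2 := by
          simp only [inner_add_left, real_inner_smul_left, real_inner_self_eq_norm_sq]
          ring
        have h3 : 0 < (c - mu) * ((t₂ - t₁) * ‖v‖ ^ 2) :=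
          mul_pos (sub_pos.mpr hcmu) (mul_pos hts hvpos)
        have h4 : (c - mu) * ((t₂ - t₁) * ‖v‖ ^ 2) =
            c * (t₂ - t₁) * ‖v‖ ^ 2 - mu * ((t₂ - t₁) * ‖v‖ ^ 2) := by ring
        have hid2 : ⟪x + t₂ • v, v⟫ = ⟪x + t₁ • v, v⟫ + (t₂ - t₁) * ‖v‖ ^ 2 := by
          linarith [hid]
        have h5 : mu * ⟪x + t₂ • v, v⟫ =
            mu * ⟪x + t₁ • v, v⟫ + mu * ((t₂ - t₁) * ‖v‖ ^ 2) := by rw [hid2]; ring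
        show G t₁ < G t₂
        simp only [hG]
        linarith [hDlb, h3, h4, h5]
      have hgdiff : Differentiable ℝ g := fun t => (hgd t).differentiableAt
      have hderiv : deriv g = G := funext fun t => (hgd t).deriv
      have hgc : StrictConvexOn ℝ Set.univ g :=
        StrictMono.strictConvexOn_univ_of_deriv hgdiff.continuous (hderiv ▸ hGmono)
      have hx0 : x + (0:ℝ) • v = x := by simp
      have hy1 : x + (1:ℝ) • v = y := by simp [hv]
      have ha' : a = 1 - b := by linarith
      have hcomb : a • x + b • y = x + b • v := by
        rw [hv, smul_sub, ha', sub_smul, one_smul]; abel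
      have hj := hgc.2 (Set.mem_univ (0:ℝ)) (Set.mem_univ (1:ℝ)) (by norm_num) ha hb hab
      have hb' : a • (0:ℝ) + b • (1:ℝ) = b := by simp
      rw [hb'] at hj
      have e1 : g b = L (a • x + b • y) - mu / 2 * ‖a • x + b • y‖ ^ 2 := by
        rw [hg]; simp only [hcomb]
      have e2 : g 0 = L x - mu / 2 * ‖x‖ ^ 2 := by rw [hg]; simp only [hx0]
      have e3 : g 1 = L y - mu / 2 * ‖y‖ ^ 2 := by rw [hg]; simp only [hy1]
      rw [e1, e2, e3] at hj
      simpa using hj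
    refine ⟨main, ?_⟩
    have hterm : ∀ j, ConvexOn ℝ s (fun β : EuclideanSpace ℝ (Fin p) =>
        ρ (β j) + mu / 2 * (β j) ^ 2) := by
      intro j
      refine ⟨hconv, ?_⟩
      intro x _ y _ a b ha hb hab
      have happ : (a • x + b • y) j = a * x j + b * y j := by
        simp [PiLp.add_apply, PiLp.smul_apply, smul_eq_mul]
      have := hA.conv.2 (Set.mem_univ (x j)) (Set.mem_univ (y j)) ha hb hab
      simp only [smul_eq_mul] at this ⊢
      rw [happ]
      exact this
    have hsum : ∀ t : Finset (Fin p), ConvexOn ℝ s (fun β : EuclideanSpace ℝ (Fin p) =>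
        ∑ j ∈ t, (ρ (β j) + mu / 2 * (β j) ^ 2)) := by
      intro t
      induction t using Finset.induction_on with
      | empty => simpa using convexOn_const (0:ℝ) hconv
      | @insert j t hj ih =>
        have : (fun β : EuclideanSpace ℝ (Fin p) =>
            ∑ i ∈ insert j t, (ρ (β i) + mu / 2 * (β i) ^ 2)) =
            fun β => (ρ (β j) + mu / 2 * (β j) ^ 2) +
              ∑ i ∈ t, (ρ (β i) + mu / 2 * (β i) ^ 2) := by
          funext β; rw [Finset.sum_insert hj]
        rw [this]
        exact (hterm j).add ih
    have heq : (fun β : EuclideanSpace ℝ (Fin p) => L β + ∑ j, ρ (β j)) =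
        fun β => (L β - mu / 2 * ‖β‖ ^ 2) +
          ∑ j, (ρ (β j) + mu / 2 * (β j) ^ 2) := by
      funext β
      have h1 : ∑ j, (ρ (β j) + mu / 2 * (β j) ^ 2) =
          (∑ j, ρ (β j)) + mu / 2 * ∑ j, (β j) ^ 2 := by
        rw [Finset.sum_add_distrib, Finset.mul_sum]
      rw [h1, ← norm_sq_eq_sum']; ring
    rw [heq]
    exact main.add_convexOn (hsum Finset.univ)
end

section
/- Let p be a positive integer, μ > 0, and let Σ̂ be a symmetric p×p real matrix. Then on the convex set of symmetric positive definite p×p matrices Θ with spectral norm ‖Θ‖₂ ≤ 1/√μ, the function Θ ↦ trace(Σ̂Θ) − log det(Θ) − (μ/2)‖Θ‖_F² is convex; in particular, the graphical Lasso loss Θ ↦ trace(Σ̂Θ) − log det(Θ) is strictly convex on this set. -/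
open scoped BigOperators

/-- The spectral norm (largest singular value) of a real `p×p` matrix, realized as the
operator norm of the induced continuous linear map on Euclidean space. -/
noncomputable def specNorm {p : ℕ} (M : Matrix (Fin p) (Fin p) ℝ) : ℝ :=
  ‖Matrix.toEuclideanCLM (𝕜 := ℝ) M‖

section helpers

lemma convexOn_of_midpoint {E : Type*} [AddCommGroup E] [Module ℝ E] [TopologicalSpace E]
    [IsTopologicalAddGroup E] [ContinuousSMul ℝ E] {s : Set E} (hs : Convex ℝ s) {f : E → ℝ}
    (hf : ContinuousOn f s)
    (hmid : ∀ x ∈ s, ∀ y ∈ s, f ((2⁻¹:ℝ) • x + (2⁻¹:ℝ) • y) ≤ 2⁻¹ * f x + 2⁻¹ * f y) :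
    ConvexOn ℝ s f := by
  refine ⟨hs, ?_⟩
  intro x hx y hy a b ha hb hab
  set γ : ℝ → E := fun t => x + t • (y - x) with hγ
  have hγmem : ∀ t ∈ Set.Icc (0:ℝ) 1, γ t ∈ s := by
    intro t ht
    have h := hs hx hy (by linarith [ht.2] : (0:ℝ) ≤ 1 - t) ht.1 (by ring)
    have : (1 - t) • x + t • y = γ t := by simp [hγ, smul_sub, sub_smul]; abel
    rwa [this] at h
  have hγc : Continuous γ := by continuity
  set g : ℝ → ℝ := fun t => f (γ t) - ((1 - t) * f x + t * f y) with hg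
  have hgc : ContinuousOn g (Set.Icc 0 1) := by
    apply ContinuousOn.sub
    · exact hf.comp hγc.continuousOn hγmem
    · fun_prop
  have hgmid : ∀ u ∈ Set.Icc (0:ℝ) 1, ∀ v ∈ Set.Icc (0:ℝ) 1,
      g ((u + v) / 2) ≤ (g u + g v) / 2 := by
    intro u hu v hv
    have hγmid : γ ((u + v) / 2) = (2⁻¹:ℝ) • γ u + (2⁻¹:ℝ) • γ v := by
      simp only [hγ]
      module
    have := hmid _ (hγmem u hu) _ (hγmem v hv)
    rw [← hγmid] at this
    simp only [hg]
    have h2 : ((1 - (u+v)/2) * f x + ((u+v)/2) * f y)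
        = 2⁻¹ * ((1-u) * f x + u * f y) + 2⁻¹ * ((1-v) * f x + v * f y) := by ring
    rw [h2]
    linarith
  -- max argument
  have hcpt : IsCompact (Set.Icc (0:ℝ) 1) := isCompact_Icc
  obtain ⟨t₀, ht₀T, ht₀max⟩ := hcpt.exists_isMaxOn ⟨0, by norm_num⟩ hgc
  set M := g t₀ with hM
  have hMle : ∀ t ∈ Set.Icc (0:ℝ) 1, g t ≤ M := fun t ht => ht₀max ht
  have hg0 : g 0 = 0 := by simp [hg, hγ]
  have hg1 : g 1 = 0 := by
    simp only [hg, hγ]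
    have : x + (1:ℝ) • (y - x) = y := by simp
    rw [this]; ring
  have hM0 : M ≤ 0 := by
    by_contra hMpos
    push_neg at hMpos
    set A := {t | t ∈ Set.Icc (0:ℝ) 1 ∧ g t = M} with hA
    have hAne : A.Nonempty := ⟨t₀, ht₀T, rfl⟩
    have hAbdd : BddBelow A := ⟨0, fun t ht => ht.1.1⟩
    have hAclosed : IsClosed A := by
      have : A = Set.Icc (0:ℝ) 1 ∩ g ⁻¹' {M} := by
        ext t; simp [hA, Set.mem_inter_iff]
      rw [this]
      exact hgc.preimage_isClosed_of_isClosed isClosed_Icc isClosed_singleton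
    set m0 := sInf A with hm0
    have hm0A : m0 ∈ A := hAclosed.csInf_mem hAne hAbdd
    have hm0T : m0 ∈ Set.Icc (0:ℝ) 1 := hm0A.1
    have hm0g : g m0 = M := hm0A.2
    have hm0ne0 : m0 ≠ 0 := by
      intro h; rw [h, hg0] at hm0g; linarith
    have hm0ne1 : m0 ≠ 1 := by
      intro h; rw [h, hg1] at hm0g; linarith
    have hm0pos : 0 < m0 := lt_of_le_of_ne hm0T.1 (Ne.symm hm0ne0)
    have hm0lt1 : m0 < 1 := lt_of_le_of_ne hm0T.2 hm0ne1
    set h := min m0 (1 - m0) with hh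
    have hhpos : 0 < h := lt_min hm0pos (by linarith)
    have ht1T : m0 - h ∈ Set.Icc (0:ℝ) 1 := by
      constructor
      · have : h ≤ m0 := min_le_left _ _
        linarith
      · linarith [hm0T.2, hhpos]
    have ht2T : m0 + h ∈ Set.Icc (0:ℝ) 1 := by
      constructor
      · linarith [hm0T.1, hhpos.le]
      · have : h ≤ 1 - m0 := min_le_right _ _
        linarith
    have ht1lt : g (m0 - h) < M := by
      have hle : g (m0 - h) ≤ M := hMle _ ht1T
      rcases lt_or_eq_of_le hle with h' | h'
      · exact h'
      · exfalso
        have : m0 - h ∈ A := ⟨ht1T, h'⟩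
        have : m0 ≤ m0 - h := csInf_le hAbdd this
        linarith
    have ht2le : g (m0 + h) ≤ M := hMle _ ht2T
    have := hgmid _ ht1T _ ht2T
    have hmideq : ((m0 - h) + (m0 + h)) / 2 = m0 := by ring
    rw [hmideq, hm0g] at this
    clear_value γ g M A m0 h
    linarith [ht1lt, ht2le, this]
  -- conclude
  have hbT : b ∈ Set.Icc (0:ℝ) 1 := ⟨hb, by linarith⟩
  have := le_trans (hMle b hbT) hM0
  simp only [hg, hγ] at this
  have hxy : x + b • (y - x) = a • x + b • y := by
    rw [smul_sub]
    rw [show a = 1 - b by linarith, sub_smul, one_smul]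
    abel
  rw [hxy] at this
  have ha' : 1 - b = a := by linarith
  rw [ha'] at this
  simp only [smul_eq_mul]
  linarith


open Matrix
open scoped Matrix.Norms.L2Operator
open scoped MatrixOrder

variable {p : ℕ}

lemma matPosDef_smul {M : Matrix (Fin p) (Fin p) ℝ} {c : ℝ} (hc : 0 < c) (hM : M.PosDef) :
    (c • M).PosDef := by
  rw [Matrix.posDef_iff_dotProduct_mulVec]
  constructor
  · have h1 := hM.1
    unfold Matrix.IsHermitian at *
    rw [conjTranspose_smul, h1]
    simp
  · intro x hx
    have := hM.dotProduct_mulVec_pos hx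
    rw [smul_mulVec, dotProduct_smul]
    exact smul_pos hc this

lemma matPosSemidef_smul {M : Matrix (Fin p) (Fin p) ℝ} {c : ℝ} (hc : 0 ≤ c) (hM : M.PosSemidef) :
    (c • M).PosSemidef := by
  rw [Matrix.posSemidef_iff_dotProduct_mulVec]
  constructor
  · have h1 := hM.1
    unfold Matrix.IsHermitian at *
    rw [conjTranspose_smul, h1]
    simp
  · intro x
    have := hM.dotProduct_mulVec_nonneg x
    rw [smul_mulVec, dotProduct_smul]
    exact smul_nonneg hc this

lemma matPosDef_conj {A P : Matrix (Fin p) (Fin p) ℝ} (hA : A.PosDef) (hP : IsUnit P) :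
    (Pᴴ * A * P).PosDef := by
  rw [Matrix.posDef_iff_dotProduct_mulVec]
  constructor
  · exact Matrix.isHermitian_conjTranspose_mul_mul P hA.1
  · intro x hx
    have hPx : P *ᵥ x ≠ 0 := by
      intro h
      apply hx
      have hinj := Matrix.mulVec_injective_iff_isUnit.2 hP
      apply hinj
      rw [h, Matrix.mulVec_zero]
    simpa only [star_mulVec, dotProduct_mulVec, vecMul_vecMul] using hA.dotProduct_mulVec_pos hPx

-- Frobenius sum-of-squares helper bound: q (M * N) ≤ ‖M‖^2 * q N
lemma q_mul_le (M N : Matrix (Fin p) (Fin p) ℝ) :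
    ∑ i, ∑ j, ((M * N) i j)^2 ≤ ‖M‖^2 * ∑ i, ∑ j, (N i j)^2 := by
  rw [Finset.sum_comm]
  rw [Finset.sum_comm (s := Finset.univ) (t := Finset.univ) (f := fun i j => (N i j)^2)]
  rw [Finset.mul_sum]
  refine Finset.sum_le_sum fun j _ => ?_
  -- column j
  set c : Fin p → ℝ := fun k => N k j with hc
  have hcol : ∀ i, (M * N) i j = (M *ᵥ c) i := by
    intro i; simp [Matrix.mul_apply, Matrix.mulVec, dotProduct, hc]
  have hnorm : ∀ (v : Fin p → ℝ),
      ∑ i, (v i)^2 = ‖(EuclideanSpace.equiv (Fin p) ℝ).symm v‖^2 := by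
    intro v
    rw [EuclideanSpace.norm_eq]
    rw [Real.sq_sqrt (by positivity)]
    simp [sq_abs]
  calc ∑ i, ((M * N) i j)^2 = ∑ i, ((M *ᵥ c) i)^2 := by simp [hcol]
    _ = ‖(EuclideanSpace.equiv (Fin p) ℝ).symm (M *ᵥ c)‖^2 := hnorm _
    _ ≤ (‖M‖ * ‖(EuclideanSpace.equiv (Fin p) ℝ).symm c‖)^2 := by
        have hkey : ‖(EuclideanSpace.equiv (Fin p) ℝ).symm (M *ᵥ c)‖
            ≤ ‖M‖ * ‖(EuclideanSpace.equiv (Fin p) ℝ).symm c‖ :=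
          Matrix.l2_opNorm_mulVec M ((EuclideanSpace.equiv (Fin p) ℝ).symm c)
        exact pow_le_pow_left₀ (norm_nonneg _) hkey 2
    _ = ‖M‖^2 * ∑ k, (N k j)^2 := by
        rw [mul_pow, hnorm c]


-- q M = trace-like sum of squares; helper: transpose invariance
lemma q_transpose (M : Matrix (Fin p) (Fin p) ℝ) :
    ∑ i, ∑ j, (Mᵀ i j)^2 = ∑ i, ∑ j, (M i j)^2 := by
  rw [Finset.sum_comm]
  simp [Matrix.transpose_apply]

set_option maxHeartbeats 1000000 in
lemma logdet_midpoint {mu : ℝ} (hmu : 0 < mu) {A B : Matrix (Fin p) (Fin p) ℝ}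
    (hA : A.PosDef) (hB : B.PosDef)
    (hCn : ‖(2⁻¹:ℝ) • A + (2⁻¹:ℝ) • B‖ ≤ 1 / Real.sqrt mu) :
    Real.log A.det / 2 + Real.log B.det / 2
      + mu / 8 * (∑ i, ∑ j, (A i j - B i j)^2)
      ≤ Real.log ((2⁻¹:ℝ) • A + (2⁻¹:ℝ) • B).det := by
  classical
  set C : Matrix (Fin p) (Fin p) ℝ := (2⁻¹:ℝ) • A + (2⁻¹:ℝ) • B with hCdef
  have hCpd : C.PosDef := by
    apply Matrix.PosDef.add
    · exact matPosDef_smul (by norm_num) hA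
    · exact matPosDef_smul (by norm_num) hB
  set S : Matrix (Fin p) (Fin p) ℝ := CFC.sqrt C with hSdef
  have hSpsd : S.PosSemidef := Matrix.nonneg_iff_posSemidef.mp (CFC.sqrt_nonneg C)
  have hSS : S * S = C := CFC.sqrt_mul_sqrt_self C hCpd.posSemidef.nonneg
  have hSH : S.IsHermitian := hSpsd.isHermitian
  have hdetC : 0 < C.det := hCpd.det_pos
  have hdetSS : S.det * S.det = C.det := by rw [← Matrix.det_mul, hSS]
  have hSdetne : S.det ≠ 0 := by
    intro h; rw [h, mul_zero] at hdetSS; linarith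
  have hSdetu : IsUnit S.det := isUnit_iff_ne_zero.2 hSdetne
  have hSunit : IsUnit S := (Matrix.isUnit_iff_isUnit_det S).2 hSdetu
  have hSiS : S⁻¹ * S = 1 := Matrix.nonsing_inv_mul S hSdetu
  have hSSi : S * S⁻¹ = 1 := Matrix.mul_nonsing_inv S hSdetu
  have hSiunit : IsUnit S⁻¹ := by
    rw [Matrix.isUnit_iff_isUnit_det, Matrix.det_nonsing_inv]
    exact isUnit_ringInverse.2 hSdetu
  have hSiH : S⁻¹.IsHermitian := hSH.inv
  set W : Matrix (Fin p) (Fin p) ℝ := S⁻¹ * A * S⁻¹ with hWdef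
  set W' : Matrix (Fin p) (Fin p) ℝ := S⁻¹ * B * S⁻¹ with hW'def
  have hWpd : W.PosDef := by
    have := matPosDef_conj hA hSiunit
    rwa [hSiH] at this
  have hW'pd : W'.PosDef := by
    have := matPosDef_conj hB hSiunit
    rwa [hSiH] at this
  have hAW : S * W * S = A := by
    simp only [hWdef, Matrix.mul_assoc, hSiS, Matrix.mul_one]
    rw [← Matrix.mul_assoc, hSSi, Matrix.one_mul]
  have hBW : S * W' * S = B := by
    simp only [hW'def, Matrix.mul_assoc, hSiS, Matrix.mul_one]
    rw [← Matrix.mul_assoc, hSSi, Matrix.one_mul]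
  have hCid : S⁻¹ * C * S⁻¹ = 1 := by
    rw [← hSS, ← Matrix.mul_assoc, Matrix.mul_assoc (S⁻¹ * S), hSiS, hSSi, Matrix.one_mul]
  have hAB2C : A + B = (2:ℝ) • C := by
    rw [hCdef, smul_add, smul_smul, smul_smul]
    norm_num
  have hWW' : W + W' = (2:ℝ) • (1 : Matrix (Fin p) (Fin p) ℝ) := by
    have : W + W' = S⁻¹ * (A + B) * S⁻¹ := by
      rw [hWdef, hW'def, Matrix.mul_add, Matrix.add_mul]
    rw [this, hAB2C, Matrix.mul_smul, Matrix.smul_mul, hCid]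
  have hW'eq : W' = (2:ℝ) • (1 : Matrix (Fin p) (Fin p) ℝ) - W := by
    rw [← hWW']; abel
  -- spectral analysis of W
  have hW : W.IsHermitian := hWpd.isHermitian
  set w : Fin p → ℝ := hW.eigenvalues with hwdef
  have hwpos : ∀ i, 0 < w i := fun i => hWpd.eigenvalues_pos i
  have hwlt2 : ∀ i, w i < 2 := by
    intro i
    have hv := hW.mulVec_eigenvectorBasis i
    have hvne : (⇑(hW.eigenvectorBasis i) : Fin p → ℝ) ≠ 0 :=
      by simpa using hW.eigenvectorBasis.orthonormal.ne_zero i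
    have h2 := hW'pd.dotProduct_mulVec_pos hvne
    have hWv : W' *ᵥ ⇑(hW.eigenvectorBasis i) = (2 - w i) • ⇑(hW.eigenvectorBasis i) := by
      rw [hW'eq, Matrix.sub_mulVec, Matrix.smul_mulVec, Matrix.one_mulVec, hv, sub_smul]
    rw [hWv] at h2
    have hsv : star (⇑(hW.eigenvectorBasis i) : Fin p → ℝ) = ⇑(hW.eigenvectorBasis i) := by
      simp
    rw [hsv, dotProduct_smul] at h2
    have hvv : 0 < (⇑(hW.eigenvectorBasis i) : Fin p → ℝ) ⬝ᵥ ⇑(hW.eigenvectorBasis i) := by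
      obtain ⟨k, hk⟩ : ∃ k, (⇑(hW.eigenvectorBasis i) : Fin p → ℝ) k ≠ 0 := by
        by_contra h; push_neg at h; exact hvne (funext h)
      have hdp : (⇑(hW.eigenvectorBasis i) : Fin p → ℝ) ⬝ᵥ ⇑(hW.eigenvectorBasis i)
          = ∑ k, ((⇑(hW.eigenvectorBasis i) : Fin p → ℝ) k)^2 := by
        simp [dotProduct, sq]
      rw [hdp]
      exact Finset.sum_pos' (fun _ _ => sq_nonneg _) ⟨k, Finset.mem_univ k, by positivity⟩
    rw [smul_eq_mul] at h2
    nlinarith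
  set U : Matrix (Fin p) (Fin p) ℝ :=
    (Matrix.IsHermitian.eigenvectorUnitary hW : Matrix (Fin p) (Fin p) ℝ) with hUdef
  have hUU : U * star U = 1 :=
    (Matrix.mem_unitaryGroup_iff).mp (Matrix.IsHermitian.eigenvectorUnitary hW).2
  have hU'U : star U * U = 1 :=
    (Matrix.mem_unitaryGroup_iff').mp (Matrix.IsHermitian.eigenvectorUnitary hW).2
  have hspec : W = U * Matrix.diagonal w * star U := by
    have h := hW.spectral_theorem
    rwa [show RCLike.ofReal ∘ hW.eigenvalues = w by
      rw [RCLike.ofReal_real_eq_id]; rfl] at h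
  have herm_transpose : ∀ {M : Matrix (Fin p) (Fin p) ℝ}, M.IsHermitian → Mᵀ = M := by
    intro M h
    ext i j
    rw [Matrix.transpose_apply]
    conv_rhs => rw [← h]
    simp [Matrix.conjTranspose_apply]
  have hW'spec : W' = U * Matrix.diagonal (fun i => 2 - w i) * star U := by
    have hone : U * ((2:ℝ) • (1 : Matrix (Fin p) (Fin p) ℝ)) * star U
        = (2:ℝ) • (1 : Matrix (Fin p) (Fin p) ℝ) := by
      rw [mul_smul_comm, Matrix.mul_one, smul_mul_assoc, hUU]
    have hd : Matrix.diagonal (fun i => 2 - w i)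
        = (2:ℝ) • (1 : Matrix (Fin p) (Fin p) ℝ) - Matrix.diagonal w := by
      ext i j
      by_cases h : i = j <;> simp [Matrix.diagonal, Matrix.one_apply, h]
    have hdiag2 : U * Matrix.diagonal (fun i => 2 - w i) * star U
        = (2:ℝ) • (1 : Matrix (Fin p) (Fin p) ℝ) - U * Matrix.diagonal w * star U := by
      rw [hd, Matrix.mul_sub, Matrix.sub_mul, hone]
    rw [hW'eq, hspec, hdiag2]
  set X : Matrix (Fin p) (Fin p) ℝ := W - 1 with hXdef
  have hXherm : X.IsHermitian := hW.sub Matrix.isHermitian_one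
  have hXsym : Xᵀ = X := herm_transpose hXherm
  have hSsym : Sᵀ = S := herm_transpose hSH
  have hXspec : X = U * Matrix.diagonal (fun i => w i - 1) * star U := by
    have hone1 : U * (1 : Matrix (Fin p) (Fin p) ℝ) * star U = 1 := by
      rw [Matrix.mul_one, hUU]
    have hd : Matrix.diagonal (fun i => w i - 1) = Matrix.diagonal w - 1 := by
      ext i j
      by_cases h : i = j <;> simp [Matrix.diagonal, Matrix.one_apply, h]
    show W - 1 = _
    rw [hspec, hd, Matrix.mul_sub, Matrix.sub_mul, hone1]
  have hXX : X * X = U * (Matrix.diagonal (fun i => w i - 1)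
      * Matrix.diagonal (fun i => w i - 1)) * star U := by
    rw [hXspec]
    have hmid : star U * (U * (Matrix.diagonal (fun i => w i - 1) * star U))
        = Matrix.diagonal (fun i => w i - 1) * star U := by
      rw [← Matrix.mul_assoc, hU'U, Matrix.one_mul]
    simp only [Matrix.mul_assoc]
    rw [hmid]
  have hqX : ∑ i, ∑ j, (X i j)^2 = ∑ i, (w i - 1)^2 := by
    have h1 : ∑ i, ∑ j, (X i j)^2 = (Xᵀ * X).trace := by
      rw [Matrix.trace]
      simp only [Matrix.diag, Matrix.mul_apply, Matrix.transpose_apply, sq]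
      rw [Finset.sum_comm]
    rw [h1, hXsym, hXX, Matrix.trace_mul_cycle, ← Matrix.mul_assoc, hU'U, Matrix.one_mul,
      Matrix.diagonal_mul_diagonal, Matrix.trace_diagonal]
    apply Finset.sum_congr rfl
    intro i _
    ring
  have hdetW : W.det = ∏ i, w i := by
    rw [hspec, Matrix.det_mul_right_comm, hUU, Matrix.one_mul, Matrix.det_diagonal]
  have hdetW' : W'.det = ∏ i, (2 - w i) := by
    rw [hW'spec, Matrix.det_mul_right_comm, hUU, Matrix.one_mul, Matrix.det_diagonal]
  have hdetA : A.det = C.det * W.det := by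
    rw [← hAW, Matrix.det_mul, Matrix.det_mul, ← hdetSS]; ring
  have hdetB : B.det = C.det * W'.det := by
    rw [← hBW, Matrix.det_mul, Matrix.det_mul, ← hdetSS]; ring
  have hlogA : Real.log A.det = Real.log C.det + ∑ i, Real.log (w i) := by
    rw [hdetA, Real.log_mul (ne_of_gt hdetC) (ne_of_gt hWpd.det_pos), hdetW, Real.log_prod]
    intro i _
    exact ne_of_gt (hwpos i)
  have hlogB : Real.log B.det = Real.log C.det + ∑ i, Real.log (2 - w i) := by
    rw [hdetB, Real.log_mul (ne_of_gt hdetC) (ne_of_gt hW'pd.det_pos), hdetW', Real.log_prod]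
    intro i _
    have := hwlt2 i
    intro h
    nlinarith
  have hscalar : ∑ i, Real.log (w i) + ∑ i, Real.log (2 - w i) ≤ - ∑ i, (w i - 1)^2 := by
    have hstep : ∀ i ∈ (Finset.univ : Finset (Fin p)),
        Real.log (w i) + Real.log (2 - w i) ≤ -(w i - 1)^2 := by
      intro i _
      have h1 : 0 < w i * (2 - w i) := by nlinarith [hwpos i, hwlt2 i]
      have h2 := Real.log_le_sub_one_of_pos h1
      rw [← Real.log_mul (ne_of_gt (hwpos i)) (by nlinarith [hwlt2 i] : (2:ℝ) - w i ≠ 0)]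
      nlinarith [h2]
    calc ∑ i, Real.log (w i) + ∑ i, Real.log (2 - w i)
        = ∑ i, (Real.log (w i) + Real.log (2 - w i)) := Finset.sum_add_distrib.symm
      _ ≤ ∑ i, (-(w i - 1)^2) := Finset.sum_le_sum hstep
      _ = - ∑ i, (w i - 1)^2 := by rw [Finset.sum_neg_distrib]
  have hSnorm : ‖S‖ * ‖S‖ = ‖C‖ := by
    have h := Matrix.l2_opNorm_conjTranspose_mul_self S
    rw [hSH, hSS] at h
    exact h.symm
  have hC2 : ‖C‖ * ‖C‖ ≤ 1 / mu := by
    have h0 : (0:ℝ) ≤ ‖C‖ := norm_nonneg _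
    have h1 : (1 / Real.sqrt mu) * (1 / Real.sqrt mu) = 1 / mu := by
      rw [div_mul_div_comm, one_mul, Real.mul_self_sqrt hmu.le]
    have h2 : ‖C‖ * ‖C‖ ≤ (1 / Real.sqrt mu) * (1 / Real.sqrt mu) :=
      mul_le_mul hCn hCn h0 (le_trans h0 hCn)
    rw [h1] at h2
    exact h2
  have hSXS : S * X * S = (2⁻¹:ℝ) • (A - B) := by
    have h1 : S * X * S = A - C := by
      show S * (W - 1) * S = A - C
      rw [Matrix.mul_sub, Matrix.sub_mul, Matrix.mul_one, hAW, hSS]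
    rw [h1, hCdef]
    module
  have hq1 : ∑ i, ∑ j, ((S * X * S) i j)^2 = 4⁻¹ * ∑ i, ∑ j, ((A - B) i j)^2 := by
    rw [hSXS]
    rw [Finset.mul_sum]
    apply Finset.sum_congr rfl
    intro i _
    rw [Finset.mul_sum]
    apply Finset.sum_congr rfl
    intro j _
    simp only [Matrix.smul_apply, smul_eq_mul]
    ring
  have hq2 : ∑ i, ∑ j, ((S * X * S) i j)^2 ≤ ‖S‖^2 * ∑ i, ∑ j, ((X * S) i j)^2 := by
    have h := q_mul_le S (X * S)
    rwa [← Matrix.mul_assoc] at h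
  have hq3 : ∑ i, ∑ j, ((X * S) i j)^2 = ∑ i, ∑ j, ((S * X) i j)^2 := by
    rw [← q_transpose (X * S), Matrix.transpose_mul, hSsym, hXsym]
  have hq4 : ∑ i, ∑ j, ((S * X) i j)^2 ≤ ‖S‖^2 * ∑ i, ∑ j, (X i j)^2 :=
    q_mul_le S X
  have hqXnn : (0:ℝ) ≤ ∑ i, (w i - 1)^2 := Finset.sum_nonneg fun i _ => sq_nonneg _
  have hq5 : 4⁻¹ * (∑ i, ∑ j, ((A - B) i j)^2) ≤ (1/mu) * ∑ i, (w i - 1)^2 := by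
    calc 4⁻¹ * (∑ i, ∑ j, ((A - B) i j)^2)
        = ∑ i, ∑ j, ((S * X * S) i j)^2 := hq1.symm
      _ ≤ ‖S‖^2 * ∑ i, ∑ j, ((X * S) i j)^2 := hq2
      _ = ‖S‖^2 * ∑ i, ∑ j, ((S * X) i j)^2 := by rw [hq3]
      _ ≤ ‖S‖^2 * (‖S‖^2 * ∑ i, ∑ j, (X i j)^2) :=
          mul_le_mul_of_nonneg_left hq4 (sq_nonneg _)
      _ = (‖S‖ * ‖S‖) * ((‖S‖ * ‖S‖) * ∑ i, ∑ j, (X i j)^2) := by ring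
      _ = ‖C‖ * (‖C‖ * ∑ i, ∑ j, (X i j)^2) := by rw [hSnorm]
      _ = (‖C‖ * ‖C‖) * ∑ i, (w i - 1)^2 := by rw [hqX]; ring
      _ ≤ (1/mu) * ∑ i, (w i - 1)^2 := mul_le_mul_of_nonneg_right hC2 hqXnn
  have h6 : mu / 8 * (∑ i, ∑ j, ((A - B) i j)^2) ≤ (∑ i, (w i - 1)^2) / 2 := by
    have h := mul_le_mul_of_nonneg_left hq5 (show (0:ℝ) ≤ mu/2 by positivity)
    calc mu / 8 * (∑ i, ∑ j, ((A - B) i j)^2)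
        = mu/2 * (4⁻¹ * (∑ i, ∑ j, ((A - B) i j)^2)) := by ring
      _ ≤ mu/2 * ((1/mu) * ∑ i, (w i - 1)^2) := h
      _ = (∑ i, (w i - 1)^2) / 2 := by field_simp
  have hABentry : ∑ i, ∑ j, (A i j - B i j)^2 = ∑ i, ∑ j, ((A - B) i j)^2 := by
    apply Finset.sum_congr rfl
    intro i _
    apply Finset.sum_congr rfl
    intro j _
    simp [Matrix.sub_apply]
  rw [hlogA, hlogB, hABentry]
  linarith [hscalar, h6]

end helpers

open scoped Matrix.Norms.L2Operator

set_option maxHeartbeats 1000000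

/-- on the convex set of symmetric positive definite matrices `Θ` with spectral
norm `‖Θ‖₂ ≤ 1/√μ`, the function `Θ ↦ trace(Σ̂Θ) − log det Θ − (μ/2)‖Θ‖_F²` is convex; in
particular, the graphical Lasso loss `Θ ↦ trace(Σ̂Θ) − log det Θ` is strictly convex there. -/
theorem glasso_strictly_convex (p : ℕ) (hp : 0 < p) (mu : ℝ) (hmu : 0 < mu)
    (Sig : Matrix (Fin p) (Fin p) ℝ) (hSig : Sig.IsSymm) :
    ConvexOn ℝ
      {Θ : Matrix (Fin p) (Fin p) ℝ | Θ.IsSymm ∧ Θ.PosDef ∧ specNorm Θ ≤ 1 / Real.sqrt mu}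
      (fun Θ => (Sig * Θ).trace - Real.log Θ.det - mu / 2 * ∑ i, ∑ j, (Θ i j) ^ 2) ∧
    StrictConvexOn ℝ
      {Θ : Matrix (Fin p) (Fin p) ℝ | Θ.IsSymm ∧ Θ.PosDef ∧ specNorm Θ ≤ 1 / Real.sqrt mu}
      (fun Θ => (Sig * Θ).trace - Real.log Θ.det) := by
  set s : Set (Matrix (Fin p) (Fin p) ℝ) :=
    {Θ | Θ.IsSymm ∧ Θ.PosDef ∧ specNorm Θ ≤ 1 / Real.sqrt mu} with hsdef
  have hspec : ∀ M : Matrix (Fin p) (Fin p) ℝ, specNorm M = ‖M‖ := fun M => rfl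
  set K : Matrix (Fin p) (Fin p) ℝ → ℝ :=
    fun Θ => (Sig * Θ).trace - Real.log Θ.det - mu / 2 * ∑ i, ∑ j, (Θ i j) ^ 2 with hKdef
  -- convexity of the set
  have hconv : Convex ℝ s := by
    intro A hA B hB a b ha hb hab
    obtain ⟨hAs, hApd, hAn⟩ := hA
    obtain ⟨hBs, hBpd, hBn⟩ := hB
    refine ⟨?_, ?_, ?_⟩
    · show (a • A + b • B).IsSymm
      unfold Matrix.IsSymm at *
      rw [Matrix.transpose_add, Matrix.transpose_smul, Matrix.transpose_smul, hAs, hBs]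
    · show (a • A + b • B).PosDef
      rcases eq_or_lt_of_le ha with h0 | hapos
      · have hb1 : b = 1 := by linarith
        rw [← h0, hb1, zero_smul, one_smul, zero_add]
        exact hBpd
      · rcases eq_or_lt_of_le hb with h0' | hbpos
        · have ha1 : a = 1 := by linarith
          rw [← h0', ha1, zero_smul, one_smul, add_zero]
          exact hApd
        · exact (matPosDef_smul hapos hApd).add_posSemidef
            (matPosSemidef_smul hbpos.le hBpd.posSemidef)
    · show specNorm (a • A + b • B) ≤ 1 / Real.sqrt mu
      rw [hspec] at *
      calc ‖a • A + b • B‖ ≤ ‖a • A‖ + ‖b • B‖ := norm_add_le _ _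
        _ = a * ‖A‖ + b * ‖B‖ := by
            rw [norm_smul, norm_smul, Real.norm_eq_abs, Real.norm_eq_abs,
              abs_of_nonneg ha, abs_of_nonneg hb]
        _ ≤ a * (1 / Real.sqrt mu) + b * (1 / Real.sqrt mu) :=
            add_le_add (mul_le_mul_of_nonneg_left hAn ha) (mul_le_mul_of_nonneg_left hBn hb)
        _ = 1 / Real.sqrt mu := by rw [← add_mul, hab, one_mul]
  -- continuity of K on s
  have hqcont : Continuous fun Θ : Matrix (Fin p) (Fin p) ℝ => ∑ i, ∑ j, (Θ i j) ^ 2 := by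
    apply continuous_finset_sum
    intro i _
    apply continuous_finset_sum
    intro j _
    exact (continuous_id.matrix_elem i j).pow 2
  have hcont : ContinuousOn K s := by
    apply ContinuousOn.sub
    apply ContinuousOn.sub
    · exact ((continuous_const.matrix_mul continuous_id).matrix_trace).continuousOn
    · intro Θ hΘ
      have hdet : Θ.det ≠ 0 := ne_of_gt hΘ.2.1.det_pos
      exact ((Real.continuousAt_log hdet).comp
        (continuous_id.matrix_det).continuousAt).continuousWithinAt
    · exact (continuous_const.mul hqcont).continuousOn
  -- midpoint inequality for K
  have hmid : ∀ x ∈ s, ∀ y ∈ s, K ((2⁻¹:ℝ) • x + (2⁻¹:ℝ) • y) ≤ 2⁻¹ * K x + 2⁻¹ * K y := by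
    intro x hx y hy
    have hm : (2⁻¹:ℝ) • x + (2⁻¹:ℝ) • y ∈ s :=
      hconv hx hy (by norm_num) (by norm_num) (by norm_num)
    have hmn : ‖(2⁻¹:ℝ) • x + (2⁻¹:ℝ) • y‖ ≤ 1 / Real.sqrt mu := by
      have := hm.2.2; rwa [hspec] at this
    have hlog := logdet_midpoint hmu hx.2.1 hy.2.1 hmn
    have htr : (Sig * ((2⁻¹:ℝ) • x + (2⁻¹:ℝ) • y)).trace
        = 2⁻¹ * (Sig * x).trace + 2⁻¹ * (Sig * y).trace := by
      rw [Matrix.mul_add, Matrix.mul_smul, Matrix.mul_smul, Matrix.trace_add,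
        Matrix.trace_smul, Matrix.trace_smul]
      simp [smul_eq_mul]
    have hq : ∑ i, ∑ j, (((2⁻¹:ℝ) • x + (2⁻¹:ℝ) • y) i j) ^ 2
        = 2⁻¹ * (∑ i, ∑ j, (x i j)^2) + 2⁻¹ * (∑ i, ∑ j, (y i j)^2)
          - 4⁻¹ * (∑ i, ∑ j, (x i j - y i j)^2) := by
      have hent : ∀ i j, (((2⁻¹:ℝ) • x + (2⁻¹:ℝ) • y) i j) ^ 2
          = 2⁻¹ * (x i j)^2 + 2⁻¹ * (y i j)^2 - 4⁻¹ * (x i j - y i j)^2 := by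
        intro i j
        simp only [Matrix.add_apply, Matrix.smul_apply, smul_eq_mul]
        ring
      calc ∑ i, ∑ j, (((2⁻¹:ℝ) • x + (2⁻¹:ℝ) • y) i j) ^ 2
          = ∑ i, ∑ j, (2⁻¹ * (x i j)^2 + 2⁻¹ * (y i j)^2 - 4⁻¹ * (x i j - y i j)^2) := by
            apply Finset.sum_congr rfl; intro i _
            apply Finset.sum_congr rfl; intro j _
            exact hent i j
        _ = _ := by
            simp only [Finset.sum_add_distrib, Finset.sum_sub_distrib, ← Finset.mul_sum]
    show (Sig * ((2⁻¹:ℝ) • x + (2⁻¹:ℝ) • y)).trace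
        - Real.log ((2⁻¹:ℝ) • x + (2⁻¹:ℝ) • y).det
        - mu / 2 * ∑ i, ∑ j, (((2⁻¹:ℝ) • x + (2⁻¹:ℝ) • y) i j) ^ 2
        ≤ 2⁻¹ * K x + 2⁻¹ * K y
    rw [htr, hq]
    show _ ≤ 2⁻¹ * ((Sig * x).trace - Real.log x.det - mu / 2 * ∑ i, ∑ j, (x i j) ^ 2)
        + 2⁻¹ * ((Sig * y).trace - Real.log y.det - mu / 2 * ∑ i, ∑ j, (y i j) ^ 2)
    nlinarith [hlog]
  have hK : ConvexOn ℝ s K := convexOn_of_midpoint hconv hcont hmid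
  -- strict convexity of the quadratic part
  have hqstrict : StrictConvexOn ℝ s (fun Θ => mu / 2 * ∑ i, ∑ j, (Θ i j) ^ 2) := by
    refine ⟨hconv, ?_⟩
    intro x hx y hy hne a b ha hb hab
    obtain ⟨i0, j0, hij⟩ : ∃ i j, x i j ≠ y i j := by
      by_contra h
      push_neg at h
      exact hne (by ext i j; exact h i j)
    have hqd : 0 < ∑ i, ∑ j, (x i j - y i j)^2 := by
      have h0 : 0 < (x i0 j0 - y i0 j0)^2 := by
        have := sub_ne_zero.mpr hij
        positivity
      have hle : (x i0 j0 - y i0 j0)^2 ≤ ∑ j, (x i0 j - y i0 j)^2 :=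
        Finset.single_le_sum (f := fun j => (x i0 j - y i0 j)^2)
          (fun j _ => sq_nonneg _) (Finset.mem_univ j0)
      have hle2 : ∑ j, (x i0 j - y i0 j)^2 ≤ ∑ i, ∑ j, (x i j - y i j)^2 :=
        Finset.single_le_sum (f := fun i => ∑ j, (x i j - y i j)^2)
          (fun i _ => Finset.sum_nonneg fun j _ => sq_nonneg _)
          (Finset.mem_univ i0)
      linarith
    have hb' : b = 1 - a := by linarith
    subst hb'
    have hid : ∑ i, ∑ j, ((a • x + (1-a) • y) i j) ^ 2
        = a * (∑ i, ∑ j, (x i j)^2) + (1-a) * (∑ i, ∑ j, (y i j)^2)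
          - (a * (1-a)) * (∑ i, ∑ j, (x i j - y i j)^2) := by
      have hent : ∀ i j, ((a • x + (1-a) • y) i j) ^ 2
          = a * (x i j)^2 + (1-a) * (y i j)^2 - (a * (1-a)) * (x i j - y i j)^2 := by
        intro i j
        simp only [Matrix.add_apply, Matrix.smul_apply, smul_eq_mul]
        ring
      calc ∑ i, ∑ j, ((a • x + (1-a) • y) i j) ^ 2
          = ∑ i, ∑ j, (a * (x i j)^2 + (1-a) * (y i j)^2
              - (a * (1-a)) * (x i j - y i j)^2) := by
            apply Finset.sum_congr rfl; intro i _
            apply Finset.sum_congr rfl; intro j _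
            exact hent i j
        _ = _ := by
            simp only [Finset.sum_add_distrib, Finset.sum_sub_distrib, ← Finset.mul_sum]
    have hQ : ∑ i, ∑ j, ((a • x + (1-a) • y) i j) ^ 2
        < a * (∑ i, ∑ j, (x i j)^2) + (1-a) * (∑ i, ∑ j, (y i j)^2) := by
      have := mul_pos (mul_pos ha hb) hqd
      nlinarith [hid]
    show mu / 2 * ∑ i, ∑ j, ((a • x + (1-a) • y) i j) ^ 2
        < a • (mu / 2 * ∑ i, ∑ j, (x i j) ^ 2) + (1-a) • (mu / 2 * ∑ i, ∑ j, (y i j) ^ 2)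
    simp only [smul_eq_mul]
    calc mu / 2 * ∑ i, ∑ j, ((a • x + (1-a) • y) i j) ^ 2
        < mu / 2 * (a * (∑ i, ∑ j, (x i j)^2) + (1-a) * (∑ i, ∑ j, (y i j)^2)) := by
          apply mul_lt_mul_of_pos_left hQ
          positivity
      _ = a * (mu / 2 * ∑ i, ∑ j, (x i j) ^ 2) + (1-a) * (mu / 2 * ∑ i, ∑ j, (y i j) ^ 2) := by
          ring
  constructor
  · exact hK
  · have heq : (fun Θ : Matrix (Fin p) (Fin p) ℝ => (Sig * Θ).trace - Real.log Θ.det)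
        = fun Θ => K Θ + mu / 2 * ∑ i, ∑ j, (Θ i j) ^ 2 := by
      funext Θ
      simp only [hKdef]
      ring
    rw [heq]
    exact hK.add_strictConvexOn hqstrict
end
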